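/- arXiv:2305.03861 — 8 statements merged into one kernel-verified Lean document; each statement's English description precedes it below -/
import Mathlib

section
/- Let n ≥ 4 and let A be a real symmetric n×n matrix with trace zero. Then trace(A⁴) ≤ ((n² − 3n + 3)/(n(n − 1))) · (trace(A²))². -/
section Helpers
variable {ι : Type*}

private lemma my_abs_le (a b : ℝ) (h : a^2 ≤ b^2) (hb : 0 ≤ b) : |a| ≤ b := by
  rw [← Real.sqrt_sq_eq_abs, ← Real.sqrt_sq hb]
  exact Real.sqrt_le_sqrt h

private lemma exp_cube (s : Finset ι) (y : ι → ℝ) (c M : ℝ) :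
    ∑ i ∈ s, (y i + c)^2 * (M - y i)
      = M * (∑ i ∈ s, y i^2) + (2*c*M - c^2) * (∑ i ∈ s, y i) + (s.card:ℝ)*(c^2*M)
        - (∑ i ∈ s, y i^3) - 2*c*(∑ i ∈ s, y i^2) := by
  rw [Finset.mul_sum, Finset.mul_sum, Finset.mul_sum]
  rw [show ((s.card:ℝ)*(c^2*M)) = ∑ _i ∈ s, c^2*M by
    rw [Finset.sum_const, nsmul_eq_mul]]
  rw [← Finset.sum_add_distrib, ← Finset.sum_add_distrib, ← Finset.sum_sub_distrib,
    ← Finset.sum_sub_distrib]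
  exact Finset.sum_congr rfl fun i _ => by ring

private lemma exp_lin (s : Finset ι) (y : ι → ℝ) (c : ℝ) :
    ∑ i ∈ s, (y i + c) = (∑ i ∈ s, y i) + (s.card:ℝ)*c := by
  rw [Finset.sum_add_distrib, Finset.sum_const, nsmul_eq_mul]

private lemma exp_sq (s : Finset ι) (y : ι → ℝ) (c : ℝ) :
    ∑ i ∈ s, (y i + c)^2
      = (∑ i ∈ s, y i^2) + 2*c*(∑ i ∈ s, y i) + (s.card:ℝ)*c^2 := by
  rw [Finset.mul_sum]
  rw [show ((s.card:ℝ)*c^2) = ∑ _i ∈ s, c^2 by rw [Finset.sum_const, nsmul_eq_mul]]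
  rw [← Finset.sum_add_distrib, ← Finset.sum_add_distrib]
  exact Finset.sum_congr rfl fun i _ => by ring

private lemma exp_four (s : Finset ι) (y : ι → ℝ) (c : ℝ) :
    ∑ i ∈ s, (y i + c)^4
      = (∑ i ∈ s, y i^4) + 4*c*(∑ i ∈ s, y i^3) + 6*c^2*(∑ i ∈ s, y i^2)
        + 4*c^3*(∑ i ∈ s, y i) + (s.card:ℝ)*c^4 := by
  rw [Finset.mul_sum, Finset.mul_sum, Finset.mul_sum]
  rw [show ((s.card:ℝ)*c^4) = ∑ _i ∈ s, c^4 by rw [Finset.sum_const, nsmul_eq_mul]]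
  rw [← Finset.sum_add_distrib, ← Finset.sum_add_distrib, ← Finset.sum_add_distrib,
    ← Finset.sum_add_distrib]
  exact Finset.sum_congr rfl fun i _ => by ring

private lemma cube_bound_fs (s : Finset ι) (K : ℕ) (hK : 2 ≤ K) (hcard : s.card = K)
    (S M : ℝ) (hS : 0 < S) (hM : 0 < M) (hM2' : (K:ℝ)*M^2 = ((K:ℝ)-1)*S)
    (y : ι → ℝ) (hy0 : ∑ i ∈ s, y i = 0) (hy2 : ∑ i ∈ s, y i^2 = S)
    (hyM : ∀ i ∈ s, y i ≤ M) :
    ∑ i ∈ s, y i^3 ≤ ((K:ℝ)-2) * S^2 / ((K:ℝ)*M) := by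
  have hK2 : (2:ℝ) ≤ (K:ℝ) := by exact_mod_cast hK
  have hnM : 0 < (K:ℝ)*M := by positivity
  set c : ℝ := S / ((K:ℝ)*M) with hc
  have h0 : 0 ≤ ∑ i ∈ s, (y i + c)^2 * (M - y i) :=
    Finset.sum_nonneg fun i hi => mul_nonneg (sq_nonneg _) (by linarith [hyM i hi])
  rw [exp_cube, hy0, hy2, hcard] at h0
  have key : M*S + (K:ℝ)*(c^2*M) - 2*c*S = ((K:ℝ)-2)*S^2/((K:ℝ)*M) := by
    rw [hc, eq_div_iff (ne_of_gt hnM)]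
    field_simp
    linear_combination hM2'
  linarith [h0, key.le]

private lemma okumura_sq (s : Finset ι) (K : ℕ) (hK : 2 ≤ K) (hcard : s.card = K)
    (y : ι → ℝ) (hy0 : ∑ i ∈ s, y i = 0) :
    (∑ i ∈ s, y i^3)^2
      ≤ ((K:ℝ)-2)^2 * (∑ i ∈ s, y i^2)^3 / ((K:ℝ)*((K:ℝ)-1)) := by
  classical
  have hK2 : (2:ℝ) ≤ (K:ℝ) := by exact_mod_cast hK
  have hK1 : (0:ℝ) < (K:ℝ) - 1 := by linarith
  have hKpos : (0:ℝ) < (K:ℝ) := by linarith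
  set S : ℝ := ∑ i ∈ s, y i^2 with hSdef
  have hS0 : 0 ≤ S := Finset.sum_nonneg fun i _ => sq_nonneg _
  rcases eq_or_lt_of_le hS0 with hS | hS
  · -- S = 0 : all terms vanish
    have hy00 : ∀ i ∈ s, y i^2 = 0 :=
      (Finset.sum_eq_zero_iff_of_nonneg fun i _ => sq_nonneg _).mp hS.symm
    have h3 : ∑ i ∈ s, y i^3 = 0 := Finset.sum_eq_zero fun i hi => by
      have hyi : y i = 0 := (pow_eq_zero_iff two_ne_zero).mp (hy00 i hi)
      simp [hyi]
    rw [h3, ← hS]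
    simp
  · -- per-coordinate bound
    have step1 : ∀ i ∈ s, (K:ℝ) * (y i)^2 ≤ ((K:ℝ)-1) * S := by
      intro i hi
      have hsum : ∑ j ∈ s.erase i, y j = -(y i) := by
        rw [Finset.sum_erase_eq_sub hi, hy0]; ring
      have hsum2 : ∑ j ∈ s.erase i, (y j)^2 = S - (y i)^2 := by
        rw [Finset.sum_erase_eq_sub hi, hSdef]
      have hcd : (((s.erase i).card) : ℝ) = (K:ℝ) - 1 := by
        rw [Finset.card_erase_of_mem hi, hcard, Nat.cast_sub (by omega)]
        simp
      have hcs := sq_sum_le_card_mul_sum_sq (s := s.erase i) (f := y)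
      rw [hsum2, hcd, hsum] at hcs
      nlinarith [hcs]
    have hMarg : 0 < ((K:ℝ)-1) * S / K := div_pos (mul_pos hK1 hS) hKpos
    set M : ℝ := Real.sqrt (((K:ℝ)-1) * S / K) with hMdef
    have hM : 0 < M := Real.sqrt_pos.mpr hMarg
    have hM2 : M^2 = ((K:ℝ)-1) * S / K := Real.sq_sqrt hMarg.le
    have hM2' : (K:ℝ)*M^2 = ((K:ℝ)-1) * S := by rw [hM2]; field_simp
    have habs : ∀ i ∈ s, |y i| ≤ M := by
      intro i hi
      have hy2 : (y i)^2 ≤ M^2 := by nlinarith [step1 i hi, hM2']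
      exact my_abs_le _ _ hy2 hM.le
    have hub : ∑ i ∈ s, y i^3 ≤ ((K:ℝ)-2) * S^2 / ((K:ℝ)*M) :=
      cube_bound_fs s K hK hcard S M hS hM hM2' y hy0 hSdef.symm
        fun i hi => (abs_le.mp (habs i hi)).2
    have hlb : -(∑ i ∈ s, y i^3) ≤ ((K:ℝ)-2) * S^2 / ((K:ℝ)*M) := by
      have h := cube_bound_fs s K hK hcard S M hS hM hM2' (fun i => -(y i))
        (by rw [Finset.sum_neg_distrib, hy0]; ring)
        ((Finset.sum_congr rfl (fun i _ => by ring)).trans hSdef.symm)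
        (fun i hi => by
          show -(y i) ≤ M
          linarith [(abs_le.mp (habs i hi)).1])
      have hneg : ∑ i ∈ s, (-(y i))^3 = -(∑ i ∈ s, y i^3) := by
        rw [← Finset.sum_neg_distrib]
        exact Finset.sum_congr rfl fun i _ => by ring
      rw [← hneg]
      exact h
    -- square it
    have hnM : 0 < (K:ℝ)*M := by positivity
    have habsT : |∑ i ∈ s, y i^3| ≤ ((K:ℝ)-2) * S^2 / ((K:ℝ)*M) :=
      abs_le.mpr ⟨by linarith, hub⟩
    have h2 : (∑ i ∈ s, y i^3)^2 ≤ (((K:ℝ)-2) * S^2 / ((K:ℝ)*M))^2 := by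
      rw [← sq_abs]
      exact pow_le_pow_left₀ (abs_nonneg _) habsT 2
    have h3 : (((K:ℝ)-2) * S^2 / ((K:ℝ)*M))^2 = ((K:ℝ)-2)^2*S^4/((K:ℝ)^2*M^2) := by
      rw [div_pow]; ring_nf
    have h4 : ((K:ℝ)-2)^2*S^4/((K:ℝ)^2*M^2) = ((K:ℝ)-2)^2 * S^3 / ((K:ℝ)*((K:ℝ)-1)) := by
      rw [div_eq_div_iff (by positivity) (by positivity)]
      linear_combination (-(((K:ℝ)-2)^2 * S^3 * (K:ℝ))) * hM2'
    calc (∑ i ∈ s, y i^3)^2 ≤ (((K:ℝ)-2) * S^2 / ((K:ℝ)*M))^2 := h2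
      _ = ((K:ℝ)-2)^2 * S^3 / ((K:ℝ)*((K:ℝ)-1)) := by rw [h3, h4]

end Helpers
set_option maxHeartbeats 2000000 in
private lemma main_fs {ι : Type*} [DecidableEq ι] :
    ∀ (N : ℕ), 2 ≤ N → ∀ s : Finset ι, s.card = N → ∀ x : ι → ℝ,
      (∑ i ∈ s, x i = 0) →
      ∑ i ∈ s, x i^4
        ≤ ((N:ℝ)^2 - 3*N + 3)/((N:ℝ)*((N:ℝ)-1)) * (∑ i ∈ s, x i^2)^2 := by
  intro N
  induction N using Nat.strong_induction_on with
  | _ N ih =>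
    intro hN s hcard x hx
    rcases eq_or_lt_of_le hN with h2 | h3
    · -- base case N = 2
      subst h2
      obtain ⟨a, b, hab, rfl⟩ := Finset.card_eq_two.mp hcard
      rw [Finset.sum_pair hab] at hx
      rw [Finset.sum_pair hab, Finset.sum_pair hab]
      have hb : x b = -x a := by linarith
      rw [hb]
      norm_num
      nlinarith [sq_nonneg (x a)]
    · -- step
      have hN3 : 3 ≤ N := h3
      obtain ⟨K, rfl⟩ : ∃ K, N = K + 1 := ⟨N - 1, by omega⟩
      have hK2 : 2 ≤ K := by omega
      have hKlt : K < K + 1 := Nat.lt_succ_self K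
      have hκ2 : (2:ℝ) ≤ (K:ℝ) := by exact_mod_cast hK2
      have hκpos : (0:ℝ) < (K:ℝ) := by linarith
      have hκ1 : (0:ℝ) < (K:ℝ) - 1 := by linarith
      have hκp1 : (0:ℝ) < (K:ℝ) + 1 := by linarith
      have hsne : s.Nonempty := Finset.card_pos.mp (by omega)
      obtain ⟨k, hk, hkmax⟩ := s.exists_max_image x hsne
      have ht0 : 0 ≤ x k := by
        have hle := Finset.sum_le_card_nsmul s x (x k) (fun i hi => hkmax i hi)
        rw [hx, hcard, nsmul_eq_mul] at hle
        have hcp : (0:ℝ) < ((K+1:ℕ):ℝ) := by positivity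
        nlinarith [hle, hcp]
      set t := x k with htdef
      set κ := (K:ℝ) with hκdef
      set s' := s.erase k with hs'def
      have hcard' : s'.card = K := by
        rw [hs'def, Finset.card_erase_of_mem hk, hcard]
        omega
      have hsum' : ∑ i ∈ s', x i = -t := by
        rw [hs'def, Finset.sum_erase_eq_sub hk, hx]; ring
      set SS := ∑ i ∈ s, x i^2 with hSS
      have hsum2' : ∑ i ∈ s', x i^2 = SS - t^2 := by
        rw [hs'def, Finset.sum_erase_eq_sub hk, hSS]
      have hsum4' : ∑ i ∈ s', x i^4 = (∑ i ∈ s, x i^4) - t^4 := by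
        rw [hs'def, Finset.sum_erase_eq_sub hk]
      -- shifted variables
      have hz0 : ∑ i ∈ s', (x i + t/κ) = 0 := by
        rw [exp_lin, hsum', hcard']
        field_simp
        rw [← hκdef]; ring
      set W := ∑ i ∈ s', (x i + t/κ)^2 with hWdef
      have hW0 : 0 ≤ W := Finset.sum_nonneg fun i _ => sq_nonneg _
      have hW : W = SS - t^2 - t^2/κ := by
        rw [hWdef, exp_sq, hsum', hsum2', hcard']
        field_simp
        ring
      set E3 := ∑ i ∈ s', (x i + t/κ)^3 with hE3def
      set E4 := ∑ i ∈ s', (x i + t/κ)^4 with hE4def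
      have hIH : E4 ≤ (κ^2 - 3*κ + 3)/(κ*(κ-1)) * W^2 := by
        have h := ih K hKlt hK2 s' hcard' (fun i => x i + t/κ) (by simpa using hz0)
        simpa [← hE3def, ← hE4def, ← hWdef] using h
      have hOk : E3^2 ≤ (κ-2)^2 * W^3 / (κ*(κ-1)) := by
        have h := okumura_sq s' K hK2 hcard' (fun i => x i + t/κ) (by simpa using hz0)
        simpa [← hE3def, ← hWdef] using h
      -- expand the quartic over s'
      have hx4 : ∑ i ∈ s', x i^4
          = E4 + 4*(-(t/κ))*E3 + 6*(-(t/κ))^2*W + κ*(-(t/κ))^4 := by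
        have e0 : ∑ i ∈ s', x i^4 = ∑ i ∈ s', ((x i + t/κ) + (-(t/κ)))^4 :=
          Finset.sum_congr rfl fun i _ => by ring
        rw [e0, exp_four s' (fun i => x i + t/κ) (-(t/κ)), hz0, hcard',
          ← hWdef, ← hE3def, ← hE4def]
        ring
      set A := 2*(κ-2)/(κ*(κ+1)*(κ-1)) with hAdef
      set B := 2*(κ-2)*(κ+1)/κ^2 with hBdef
      have hA0 : 0 ≤ A := by
        rw [hAdef]
        apply div_nonneg (by linarith)
        positivity
      have hB0 : 0 ≤ B := by
        rw [hBdef]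
        apply div_nonneg
        · nlinarith
        · positivity
      have hZ : 0 ≤ A*W^2 + B*t^2*W :=
        add_nonneg (mul_nonneg hA0 (sq_nonneg W))
          (mul_nonneg (mul_nonneg hB0 (sq_nonneg t)) hW0)
      have hmain : -(4*t/κ)*E3 ≤ A*W^2 + B*t^2*W := by
        have e1 : ((4*t/κ)*E3)^2 = (16*t^2/κ^2) * E3^2 := by ring
        have e2 : (16*t^2/κ^2) * E3^2 ≤ (16*t^2/κ^2) * ((κ-2)^2*W^3/(κ*(κ-1))) :=
          mul_le_mul_of_nonneg_left hOk (by positivity)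
        have e3 : (A*W^2 + B*t^2*W)^2
            = (A*W^2 - B*t^2*W)^2 + (16*t^2/κ^2) * ((κ-2)^2*W^3/(κ*(κ-1))) := by
          rw [hAdef, hBdef]
          field_simp
          ring
        have hsq : ((4*t/κ)*E3)^2 ≤ (A*W^2 + B*t^2*W)^2 := by
          rw [e1, e3]
          nlinarith [sq_nonneg (A*W^2 - B*t^2*W), e2]
        have habs2 : |(4*t/κ)*E3| ≤ A*W^2 + B*t^2*W := my_abs_le _ _ hsq hZ
        calc -(4*t/κ)*E3 = -((4*t/κ)*E3) := by ring
          _ ≤ |(4*t/κ)*E3| := neg_le_abs _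
          _ ≤ _ := habs2
      -- the exact algebraic identity
      have hSSeq : SS = W + t^2 + t^2/κ := by linarith [hW]
      have hid : t^4 + ((κ^2-3*κ+3)/(κ*(κ-1)))*W^2 + (A*W^2 + B*t^2*W)
            + 6*(-(t/κ))^2*W + κ*(-(t/κ))^4
          = (((κ+1)^2 - 3*(κ+1) + 3)/((κ+1)*κ)) * (W + t^2 + t^2/κ)^2 := by
        rw [hAdef, hBdef]
        field_simp
        ring
      -- final assembly
      have hcast : ((K+1:ℕ):ℝ) = κ + 1 := by push_cast; ring
      rw [hcast]
      have htotal : ∑ i ∈ s, x i^4 = t^4 + ∑ i ∈ s', x i^4 := by linarith [hsum4']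
      rw [htotal, hx4, hSSeq]
      calc t^4 + (E4 + 4*(-(t/κ))*E3 + 6*(-(t/κ))^2*W + κ*(-(t/κ))^4)
          ≤ t^4 + ((κ^2-3*κ+3)/(κ*(κ-1)))*W^2 + (A*W^2 + B*t^2*W)
              + 6*(-(t/κ))^2*W + κ*(-(t/κ))^4 := by
            have : 4*(-(t/κ))*E3 = -(4*t/κ)*E3 := by ring
            rw [this] at *
            linarith [hIH, hmain]
        _ = (((κ+1)^2 - 3*(κ+1) + 3)/((κ+1)*κ)) * (W + t^2 + t^2/κ)^2 := hid
        _ = ((κ+1)^2 - 3*(κ+1) + 3)/((κ+1)*((κ+1)-1)) * (W + t^2 + t^2/κ)^2 := by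
            norm_num
open Matrix in
private lemma trace_pow_eq_sum_eig (n k : ℕ) (A : Matrix (Fin n) (Fin n) ℝ)
    (hA : A.IsHermitian) :
    (A ^ k).trace = ∑ i, (hA.eigenvalues i) ^ k := by
  set U : Matrix (Fin n) (Fin n) ℝ := ↑hA.eigenvectorUnitary with hUdef
  set D : Matrix (Fin n) (Fin n) ℝ := diagonal (RCLike.ofReal ∘ hA.eigenvalues) with hDdef
  have hU : star U * U = 1 := Unitary.coe_star_mul_self hA.eigenvectorUnitary
  have hU2 : U * star U = 1 := Unitary.coe_mul_star_self hA.eigenvectorUnitary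
  have hpow : A ^ k = U * D ^ k * star U := by
    induction k with
    | zero => simp [pow_zero, hU2]
    | succ m ihm =>
      rw [pow_succ, ihm, pow_succ]
      nth_rewrite 1 [hA.spectral_theorem]
      rw [Unitary.conjStarAlgAut_apply]
      rw [show U * D ^ m * star U * (U * D * star U) = U * D ^ m * (star U * U) * D * star U by
        simp [Matrix.mul_assoc], hU]
      simp [Matrix.mul_assoc]
  rw [hpow, trace_mul_cycle, hU, Matrix.one_mul, hDdef, diagonal_pow, trace_diagonal]
  simp

theorem trace_pow_four_le (n : ℕ) (hn : 4 ≤ n) (A : Matrix (Fin n) (Fin n) ℝ)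
    (hA : A.IsSymm) (htr : A.trace = 0) :
    (A ^ 4).trace ≤ ((n : ℝ) ^ 2 - 3 * n + 3) / (n * (n - 1)) * (A ^ 2).trace ^ 2 := by
  have hH : A.IsHermitian := by
    rwa [Matrix.IsHermitian, Matrix.conjTranspose_eq_transpose_of_trivial]
  have h1 : A.trace = ∑ i, hH.eigenvalues i := by
    have := trace_pow_eq_sum_eig n 1 A hH
    simpa using this
  have h2 : (A ^ 2).trace = ∑ i, (hH.eigenvalues i) ^ 2 := trace_pow_eq_sum_eig n 2 A hH
  have h4 : (A ^ 4).trace = ∑ i, (hH.eigenvalues i) ^ 4 := trace_pow_eq_sum_eig n 4 A hH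
  rw [h2, h4]
  have hsum0 : ∑ i, hH.eigenvalues i = 0 := by
    rw [← h1]; exact htr
  have hmain := main_fs n (by omega) (Finset.univ : Finset (Fin n))
    (by simp) hH.eigenvalues hsum0
  simpa using hmain
end

section
/- Let n ≥ 4 and let A be a real symmetric n×n matrix with trace zero. Then equality trace(A⁴) = ((n² − 3n + 3)/(n(n − 1))) · (trace(A²))² holds if and only if A has an eigenvalue whose eigenspace has dimension at least n − 1 (equivalently, an eigenvalue of multiplicity at least n − 1). -/
open Finset Matrix

lemma sum_pair_mul {ι : Type*} [DecidableEq ι] (s : Finset ι) (a b : ι → ℝ) :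
    ∑ j ∈ s, ∑ k ∈ s, (a j - a k) * (b j - b k) =
      2 * ((s.card : ℝ) * ∑ j ∈ s, a j * b j - (∑ j ∈ s, a j) * (∑ j ∈ s, b j)) := by
  have h : ∀ j ∈ s, ∑ k ∈ s, (a j - a k) * (b j - b k) =
      (s.card : ℝ) * (a j * b j) - a j * (∑ k ∈ s, b k) - (∑ k ∈ s, a k) * b j
        + ∑ k ∈ s, a k * b k := by
    intro j _
    rw [Finset.sum_congr rfl (fun k _ => by ring :
      ∀ k ∈ s, (a j - a k) * (b j - b k) = a j * b j - a j * b k - a k * b j + a k * b k)]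
    simp [Finset.sum_add_distrib, Finset.sum_sub_distrib, ← Finset.mul_sum, ← Finset.sum_mul,
      Finset.sum_const, nsmul_eq_mul]
  rw [Finset.sum_congr rfl h]
  simp [Finset.sum_add_distrib, Finset.sum_sub_distrib, ← Finset.mul_sum, ← Finset.sum_mul,
    Finset.sum_const, nsmul_eq_mul]
  ring

lemma inner_eval (n : ℕ) (hn : 1 ≤ n) (l : Fin n → ℝ) (h1 : ∑ i, l i = 0) (i : Fin n) :
    ∑ j ∈ univ.erase i, ∑ k ∈ univ.erase i,
        ((l j - l k) * (((n : ℝ) - 2) * l i + l j + l k)) ^ 2 =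
      (-2 * (n : ℝ) * ((n : ℝ) - 1) ^ 2) * (l i) ^ 4
        + (4 * ((n : ℝ) - 2) * ((n : ℝ) - 1) * (∑ t, (l t) ^ 3)) * l i
        + (2 * ((n : ℝ) - 1) * (((n : ℝ) - 2) ^ 2 + 2) * (∑ t, (l t) ^ 2)) * (l i) ^ 2
        + 2 * (((n : ℝ) - 1) * (∑ t, (l t) ^ 4) - (∑ t, (l t) ^ 2) ^ 2) := by
  classical
  set c : ℝ := ((n : ℝ) - 2) * l i with hc
  have hterm : ∀ j ∈ univ.erase i, ∑ k ∈ univ.erase i,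
      ((l j - l k) * (((n : ℝ) - 2) * l i + l j + l k)) ^ 2 =
      ∑ k ∈ univ.erase i,
        (c ^ 2 * ((l j - l k) * (l j - l k))
          + (2 * c) * ((l j - l k) * ((l j) ^ 2 - (l k) ^ 2))
          + ((l j) ^ 2 - (l k) ^ 2) * ((l j) ^ 2 - (l k) ^ 2)) := by
    intro j _
    exact Finset.sum_congr rfl fun k _ => by ring
  rw [Finset.sum_congr rfl hterm]
  have expand : ∑ j ∈ univ.erase i, ∑ k ∈ univ.erase i,
      (c ^ 2 * ((l j - l k) * (l j - l k))
        + (2 * c) * ((l j - l k) * ((l j) ^ 2 - (l k) ^ 2))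
        + ((l j) ^ 2 - (l k) ^ 2) * ((l j) ^ 2 - (l k) ^ 2))
      = c ^ 2 * (∑ j ∈ univ.erase i, ∑ k ∈ univ.erase i, (l j - l k) * (l j - l k))
        + (2 * c) * (∑ j ∈ univ.erase i, ∑ k ∈ univ.erase i,
            (l j - l k) * ((l j) ^ 2 - (l k) ^ 2))
        + ∑ j ∈ univ.erase i, ∑ k ∈ univ.erase i,
            ((l j) ^ 2 - (l k) ^ 2) * ((l j) ^ 2 - (l k) ^ 2) := by
    simp only [Finset.sum_add_distrib, Finset.mul_sum]
  rw [expand]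
  rw [sum_pair_mul (univ.erase i) l l,
    (by exact Finset.sum_congr rfl fun j _ => rfl :
      ∑ j ∈ univ.erase i, ∑ k ∈ univ.erase i, (l j - l k) * ((l j)^2 - (l k)^2)
        = ∑ j ∈ univ.erase i, ∑ k ∈ univ.erase i,
            ((fun t => l t) j - (fun t => l t) k) * ((fun t => (l t)^2) j - (fun t => (l t)^2) k)),
    sum_pair_mul (univ.erase i) (fun t => l t) (fun t => (l t) ^ 2),
    (by exact Finset.sum_congr rfl fun j _ => rfl :
      ∑ j ∈ univ.erase i, ∑ k ∈ univ.erase i, ((l j)^2 - (l k)^2) * ((l j)^2 - (l k)^2)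
        = ∑ j ∈ univ.erase i, ∑ k ∈ univ.erase i,
            ((fun t => (l t)^2) j - (fun t => (l t)^2) k) * ((fun t => (l t)^2) j - (fun t => (l t)^2) k)),
    sum_pair_mul (univ.erase i) (fun t => (l t) ^ 2) (fun t => (l t) ^ 2)]
  have hcard : ((univ.erase i).card : ℝ) = (n : ℝ) - 1 := by
    rw [Finset.card_erase_of_mem (mem_univ i), Finset.card_univ, Fintype.card_fin]
    push_cast [Nat.cast_sub hn]
    ring
  have he : ∀ f : Fin n → ℝ, ∑ j ∈ univ.erase i, f j = (∑ j, f j) - f i := by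
    intro f
    rw [← Finset.sum_erase_add univ f (mem_univ i)]
    ring
  rw [hcard, he l, he (fun t => l t * l t), he (fun t => l t * (l t)^2),
    he (fun t => (l t)^2), he (fun t => (l t)^2 * (l t)^2), h1]
  have e2 : ∑ t, l t * l t = ∑ t, (l t) ^ 2 := Finset.sum_congr rfl fun t _ => by ring
  have e3 : ∑ t, l t * (l t) ^ 2 = ∑ t, (l t) ^ 3 := Finset.sum_congr rfl fun t _ => by ring
  have e4 : ∑ t, (l t) ^ 2 * (l t) ^ 2 = ∑ t, (l t) ^ 4 := Finset.sum_congr rfl fun t _ => by ring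
  rw [e2, e3, e4, hc]
  ring

lemma key_identity (n : ℕ) (hn : 1 ≤ n) (l : Fin n → ℝ) (h1 : ∑ i, l i = 0) :
    ∑ i, ∑ j ∈ univ.erase i, ∑ k ∈ univ.erase i,
        ((l j - l k) * (((n : ℝ) - 2) * l i + l j + l k)) ^ 2 =
      2 * ((n : ℝ) - 2) * ((((n : ℝ) ^ 2 - 3 * n + 3) * (∑ i, (l i) ^ 2) ^ 2
        - (n : ℝ) * ((n : ℝ) - 1) * ∑ i, (l i) ^ 4)) := by
  rw [Finset.sum_congr rfl fun i _ => inner_eval n hn l h1 i]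
  simp only [Finset.sum_add_distrib, ← Finset.mul_sum, Finset.sum_const, Finset.card_univ,
    Fintype.card_fin, nsmul_eq_mul]
  rw [h1]
  ring

lemma comb_lemma (n : ℕ) (hn : 4 ≤ n) (l : Fin n → ℝ)
    (h : ∀ i j k : Fin n, j ≠ i → k ≠ i →
      (l j - l k) * (((n : ℝ) - 2) * l i + l j + l k) = 0) :
    ∃ m : Fin n, ∀ j, j ≠ m → ∀ k, k ≠ m → l j = l k := by
  have hn2 : ((n : ℝ) - 2) ≠ 0 := by
    have : (4 : ℝ) ≤ (n : ℝ) := by exact_mod_cast hn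
    linarith
  by_cases hall : ∀ j k : Fin n, l j = l k
  · exact ⟨⟨0, by omega⟩, fun j _ k _ => hall j k⟩
  push_neg at hall
  obtain ⟨j0, k0, hjk⟩ := hall
  have hj0k0 : j0 ≠ k0 := fun e => hjk (by rw [e])
  -- every other index satisfies the linear relation
  have hv : ∀ i, i ≠ j0 → i ≠ k0 → ((n : ℝ) - 2) * l i + l j0 + l k0 = 0 := by
    intro i hi1 hi2
    have := h i j0 k0 (fun e => hi1 e.symm) (fun e => hi2 e.symm)
    rcases mul_eq_zero.1 this with h' | h'
    · exact absurd (by linarith [sub_eq_zero.1 h'] : l j0 = l k0) hjk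
    · exact h'
  -- pick two other indices
  have hcard : 1 < ((univ : Finset (Fin n)) \ {j0, k0}).card := by
    rw [Finset.card_sdiff_of_subset (Finset.subset_univ _), Finset.card_pair hj0k0, Finset.card_univ,
      Fintype.card_fin]
    omega
  obtain ⟨i1, hi1, i2, hi2, hi12⟩ := Finset.one_lt_card.1 hcard
  simp only [Finset.mem_sdiff, Finset.mem_insert, Finset.mem_singleton, not_or] at hi1 hi2
  obtain ⟨-, hi1j, hi1k⟩ : True ∧ i1 ≠ j0 ∧ i1 ≠ k0 := ⟨trivial, hi1.2.1, hi1.2.2⟩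
  obtain ⟨-, hi2j, hi2k⟩ : True ∧ i2 ≠ j0 ∧ i2 ≠ k0 := ⟨trivial, hi2.2.1, hi2.2.2⟩
  have hveq : l i1 = l i2 := by
    have e1 := hv i1 hi1j hi1k
    have e2 := hv i2 hi2j hi2k
    have : ((n : ℝ) - 2) * (l i1 - l i2) = 0 := by linarith
    rcases mul_eq_zero.1 this with h' | h'
    · exact absurd h' hn2
    · linarith [sub_eq_zero.1 h']
  by_cases hj : l j0 = l i1
  · -- m = k0 : everything except k0 equals l i1
    refine ⟨k0, fun j hjm k hkm => ?_⟩
    have key : ∀ t : Fin n, t ≠ k0 → l t = l i1 := by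
      intro t ht
      by_cases htj : t = j0
      · rw [htj]; exact hj
      · have e1 := hv t htj ht
        have e2 := hv i1 hi1j hi1k
        have : ((n : ℝ) - 2) * (l t - l i1) = 0 := by linarith
        rcases mul_eq_zero.1 this with h' | h'
        · exact absurd h' hn2
        · linarith [sub_eq_zero.1 h']
    rw [key j hjm, key k hkm]
  by_cases hk : l k0 = l i1
  · -- m = j0
    refine ⟨j0, fun j hjm k hkm => ?_⟩
    have key : ∀ t : Fin n, t ≠ j0 → l t = l i1 := by
      intro t ht
      by_cases htk : t = k0
      · rw [htk]; exact hk
      · have e1 := hv t ht htk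
        have e2 := hv i1 hi1j hi1k
        have : ((n : ℝ) - 2) * (l t - l i1) = 0 := by linarith
        rcases mul_eq_zero.1 this with h' | h'
        · exact absurd h' hn2
        · linarith [sub_eq_zero.1 h']
    rw [key j hjm, key k hkm]
  -- contradiction case
  exfalso
  have e1 := h i1 j0 i2 (fun e => hi1j e.symm) (Ne.symm hi12)
  have e2 := h i1 k0 i2 (fun e => hi1k e.symm) (Ne.symm hi12)
  have f1 : ((n : ℝ) - 2) * l i1 + l j0 + l i2 = 0 := by
    rcases mul_eq_zero.1 e1 with h' | h'
    · exact absurd (by rw [← hveq] at h'; linarith [sub_eq_zero.1 h'] : l j0 = l i1) hj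
    · exact h'
  have f2 : ((n : ℝ) - 2) * l i1 + l k0 + l i2 = 0 := by
    rcases mul_eq_zero.1 e2 with h' | h'
    · exact absurd (by rw [← hveq] at h'; linarith [sub_eq_zero.1 h'] : l k0 = l i1) hk
    · exact h'
  exact hjk (by linarith)

lemma conj_pow_eq (n : ℕ) (A U D : Matrix (Fin n) (Fin n) ℝ) (h1 : star U * U = 1)
    (h2 : U * star U = 1) (hsp : A = U * D * star U) (k : ℕ) :
    A ^ k = U * D ^ k * star U := by
  induction k with
  | zero => simp only [pow_zero, Matrix.mul_one]; exact h2.symm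
  | succ k ih =>
    rw [pow_succ, ih, hsp, pow_succ]
    simp only [Matrix.mul_assoc]
    rw [← Matrix.mul_assoc (star U) U, h1, Matrix.one_mul]

lemma trace_pow_eq (n : ℕ) (A : Matrix (Fin n) (Fin n) ℝ) (hA : A.IsHermitian) (k : ℕ) :
    (A ^ k).trace = ∑ i, (hA.eigenvalues i) ^ k := by
  classical
  have hU1 : (star (hA.eigenvectorUnitary : Matrix (Fin n) (Fin n) ℝ))
      * (hA.eigenvectorUnitary : Matrix (Fin n) (Fin n) ℝ) = 1 :=
    Unitary.star_mul_self_of_mem (hA.eigenvectorUnitary).2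
  have hU2 : (hA.eigenvectorUnitary : Matrix (Fin n) (Fin n) ℝ)
      * (star (hA.eigenvectorUnitary : Matrix (Fin n) (Fin n) ℝ)) = 1 :=
    Unitary.mul_star_self_of_mem (hA.eigenvectorUnitary).2
  rw [conj_pow_eq n A _ _ hU1 hU2 hA.spectral_theorem k, Matrix.trace_mul_cycle, hU1,
    Matrix.one_mul, Matrix.diagonal_pow, Matrix.trace_diagonal]
  simp [RCLike.ofReal_real_eq_id]

lemma rank_one_trace (n : ℕ) (B : Matrix (Fin n) (Fin n) ℝ) (w v : Fin n → ℝ)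
    (hB : ∀ i j, B i j = w i * v j) : B * B = B.trace • B := by
  ext i j
  simp only [Matrix.mul_apply, Matrix.smul_apply, Matrix.trace, Matrix.diag, smul_eq_mul]
  rw [Finset.sum_congr rfl (fun k _ => by rw [hB i k, hB k j]; ring :
    ∀ k ∈ Finset.univ, B i k * B k j = (w k * v k) * (w i * v j)), ← Finset.sum_mul]
  rw [Finset.sum_congr rfl (fun k _ => (hB k k) :
    ∀ k ∈ Finset.univ, B k k = w k * v k), hB i j]

lemma exists_rank_one (n : ℕ) (B : Matrix (Fin n) (Fin n) ℝ)
    (h : Module.finrank ℝ (LinearMap.range (Matrix.toLin' B)) ≤ 1) :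
    ∃ w v : Fin n → ℝ, ∀ i j, B i j = w i * v j := by
  classical
  obtain ⟨w, hw⟩ := ((Submodule.finrank_le_one_iff_isPrincipal _).1 h).principal
  have hmem : ∀ j : Fin n, ∃ c : ℝ, c • w = B *ᵥ Pi.single j 1 := by
    intro j
    have : B *ᵥ Pi.single j 1 ∈ LinearMap.range (Matrix.toLin' B) :=
      ⟨Pi.single j 1, Matrix.toLin'_apply B _⟩
    rw [hw] at this
    exact Submodule.mem_span_singleton.1 this
  choose v hv using hmem
  refine ⟨w, v, fun i j => ?_⟩
  have := congr_fun (hv j) i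
  simp only [Matrix.mulVec_single_one, Pi.smul_apply, smul_eq_mul, mul_one] at this
  rw [show B i j = B.col j i from rfl, ← this]; ring

lemma reverse_dir (n : ℕ) (hn : 4 ≤ n) (A : Matrix (Fin n) (Fin n) ℝ)
    (htr : A.trace = 0) (μ : ℝ)
    (hdim : n - 1 ≤ Module.finrank ℝ (Module.End.eigenspace (Matrix.toLin' A) μ)) :
    (A ^ 4).trace = ((n : ℝ) ^ 2 - 3 * n + 3) / (n * (n - 1)) * (A ^ 2).trace ^ 2 := by
  classical
  set B : Matrix (Fin n) (Fin n) ℝ := A - μ • 1 with hBdef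
  have hker : LinearMap.ker (Matrix.toLin' B) = Module.End.eigenspace (Matrix.toLin' A) μ := by
    ext x
    simp only [LinearMap.mem_ker, Module.End.mem_eigenspace_iff, Matrix.toLin'_apply, hBdef,
      Matrix.sub_mulVec, Matrix.smul_mulVec, Matrix.one_mulVec, sub_eq_zero]
  have hrank : Module.finrank ℝ (LinearMap.range (Matrix.toLin' B)) ≤ 1 := by
    have h := LinearMap.finrank_range_add_finrank_ker (Matrix.toLin' B)
    rw [hker, Module.finrank_fintype_fun_eq_card, Fintype.card_fin] at h
    omega
  obtain ⟨w, v, hB⟩ := exists_rank_one n B hrank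
  have hBB := rank_one_trace n B w v hB
  have htB : B.trace = -(n * μ) := by
    rw [hBdef, Matrix.trace_sub, Matrix.trace_smul, Matrix.trace_one, htr, Fintype.card_fin,
      smul_eq_mul]
    ring
  have hAe : A = B + μ • 1 := by rw [hBdef, sub_add_cancel]
  set t : ℝ := B.trace with htdef
  have h2 : A ^ 2 = (t + 2 * μ) • B + (μ ^ 2) • (1 : Matrix (Fin n) (Fin n) ℝ) := by
    rw [sq, hAe, add_mul, mul_add, mul_add]
    simp only [Matrix.smul_mul, Matrix.mul_smul, hBB, Matrix.one_mul, Matrix.mul_one, smul_smul]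
    module
  have h4 : A ^ 4 = ((t + 2 * μ) ^ 2 * t + 2 * μ ^ 2 * (t + 2 * μ)) • B
      + (μ ^ 4) • (1 : Matrix (Fin n) (Fin n) ℝ) := by
    have e : A ^ 4 = A ^ 2 * A ^ 2 := by rw [← pow_add]
    rw [e, h2, add_mul, mul_add, mul_add]
    simp only [Matrix.smul_mul, Matrix.mul_smul, hBB, Matrix.one_mul, Matrix.mul_one, smul_smul]
    module
  have htr2 : (A ^ 2).trace = (t + 2 * μ) * t + μ ^ 2 * n := by
    rw [h2, Matrix.trace_add, Matrix.trace_smul, Matrix.trace_smul, Matrix.trace_one,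
      Fintype.card_fin, smul_eq_mul, smul_eq_mul, htdef]
  have htr4 : (A ^ 4).trace = ((t + 2 * μ) ^ 2 * t + 2 * μ ^ 2 * (t + 2 * μ)) * t + μ ^ 4 * n := by
    rw [h4, Matrix.trace_add, Matrix.trace_smul, Matrix.trace_smul, Matrix.trace_one,
      Fintype.card_fin, smul_eq_mul, smul_eq_mul, htdef]
  have hn4 : (4 : ℝ) ≤ (n : ℝ) := by exact_mod_cast hn
  have hn0 : (n : ℝ) ≠ 0 := by linarith
  have hn1 : (n : ℝ) - 1 ≠ 0 := by linarith
  rw [htr2, htr4, htB]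
  field_simp
  ring

theorem trace_pow_four_eq_iff (n : ℕ) (hn : 4 ≤ n) (A : Matrix (Fin n) (Fin n) ℝ)
    (hA : A.IsSymm) (htr : A.trace = 0) :
    (A ^ 4).trace = ((n : ℝ) ^ 2 - 3 * n + 3) / (n * (n - 1)) * (A ^ 2).trace ^ 2 ↔
      ∃ μ : ℝ, n - 1 ≤ Module.finrank ℝ (Module.End.eigenspace (Matrix.toLin' A) μ) := by
  classical
  have hAH : A.IsHermitian := by
    rw [Matrix.IsHermitian, Matrix.conjTranspose_eq_transpose_of_trivial]; exact hA
  have hn4 : (4 : ℝ) ≤ (n : ℝ) := by exact_mod_cast hn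
  constructor
  · intro heq
    set l := hAH.eigenvalues with hl
    have h1 : ∑ i, l i = 0 := by
      have h := trace_pow_eq n A hAH 1
      simp only [pow_one] at h
      rw [← h, htr]
    have h2 := trace_pow_eq n A hAH 2
    have h4 := trace_pow_eq n A hAH 4
    rw [h2, h4] at heq
    have hzero : ∑ i, ∑ j ∈ univ.erase i, ∑ k ∈ univ.erase i,
        ((l j - l k) * (((n : ℝ) - 2) * l i + l j + l k)) ^ 2 = 0 := by
      rw [key_identity n (by omega) l h1]
      have hnn : (n : ℝ) * ((n : ℝ) - 1) ≠ 0 := by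
        apply mul_ne_zero <;> linarith
      have hz : ((n : ℝ) ^ 2 - 3 * n + 3) * (∑ i, (l i) ^ 2) ^ 2
          - (n : ℝ) * ((n : ℝ) - 1) * ∑ i, (l i) ^ 4 = 0 := by
        have hn1 : (n : ℝ) - 1 ≠ 0 := by linarith
        rw [heq, ← hl]
        field_simp
        ring
      rw [hz]; ring
    have hterm : ∀ i j k : Fin n, j ≠ i → k ≠ i →
        (l j - l k) * (((n : ℝ) - 2) * l i + l j + l k) = 0 := by
      have step1 := (Finset.sum_eq_zero_iff_of_nonneg (fun i _ =>
        Finset.sum_nonneg fun j _ => Finset.sum_nonneg fun k _ => sq_nonneg _)).1 hzero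
      intro i j k hj hk
      have step2 := (Finset.sum_eq_zero_iff_of_nonneg (fun j _ =>
        Finset.sum_nonneg fun k _ => sq_nonneg _)).1 (step1 i (mem_univ i)) j
        (Finset.mem_erase.2 ⟨hj, mem_univ j⟩)
      have step3 := (Finset.sum_eq_zero_iff_of_nonneg (fun k _ => sq_nonneg _)).1 step2 k
        (Finset.mem_erase.2 ⟨hk, mem_univ k⟩)
      exact pow_eq_zero_iff (two_ne_zero) |>.1 step3
    obtain ⟨m, hm⟩ := comb_lemma n hn l hterm
    obtain ⟨j0, hj0⟩ := Fintype.exists_ne_of_one_lt_card (by simp; omega) m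
    refine ⟨l j0, ?_⟩
    have hmemE : ∀ j : Fin n, j ≠ m →
        (⇑(hAH.eigenvectorBasis j) : Fin n → ℝ) ∈
          Module.End.eigenspace (Matrix.toLin' A) (l j0) := by
      intro j hj
      rw [Module.End.mem_eigenspace_iff, Matrix.toLin'_apply, hAH.mulVec_eigenvectorBasis,
        ← hl, hm j hj j0 hj0]
    have hli : LinearIndependent ℝ
        (fun j : {j : Fin n // j ≠ m} => (⇑(hAH.eigenvectorBasis ↑j) : Fin n → ℝ)) := by
      have hb : LinearIndependent ℝ (fun j : Fin n => (⇑(hAH.eigenvectorBasis j) : Fin n → ℝ)) := by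
        have := hAH.eigenvectorBasis.toBasis.linearIndependent
        rw [OrthonormalBasis.coe_toBasis] at this
        exact this.map' (WithLp.linearEquiv 2 ℝ (Fin n → ℝ)).toLinearMap (LinearEquiv.ker _)
      exact hb.comp Subtype.val Subtype.val_injective
    have hspan : Submodule.span ℝ (Set.range
        (fun j : {j : Fin n // j ≠ m} => (⇑(hAH.eigenvectorBasis ↑j) : Fin n → ℝ))) ≤
        Module.End.eigenspace (Matrix.toLin' A) (l j0) := by
      rw [Submodule.span_le]
      rintro _ ⟨j, rfl⟩
      exact hmemE j j.2
    have hcard : Fintype.card {j : Fin n // j ≠ m} = n - 1 := by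
      rw [Fintype.card_subtype_compl, Fintype.card_subtype_eq, Fintype.card_fin]
    have hfr := finrank_span_eq_card hli
    rw [hcard] at hfr
    calc n - 1 = Module.finrank ℝ (Submodule.span ℝ (Set.range
          (fun j : {j : Fin n // j ≠ m} => (⇑(hAH.eigenvectorBasis ↑j) : Fin n → ℝ)))) := hfr.symm
      _ ≤ _ := Submodule.finrank_mono hspan
  · rintro ⟨μ, hdim⟩
    exact reverse_dir n hn A htr μ hdim
end

section
/- Let n ≥ 3 and let λ₁, …, λₙ be real numbers with λ₁ + ⋯ + λₙ = 0. Writing pₖ = σₖ(λ)/C(n,k), where σₖ(λ) is the k-th elementary symmetric polynomial of λ₁, …, λₙ and C(n,k) is the binomial coefficient, one has p₃² + 4p₂³ ≤ 0. -/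
open Finset

/-- The `k`-th elementary symmetric polynomial of `lam 0, …, lam (n-1)`. -/
noncomputable def esymm {n : ℕ} (k : ℕ) (lam : Fin n → ℝ) : ℝ :=
  ∑ s ∈ (Finset.univ : Finset (Fin n)).powersetCard k, ∏ i ∈ s, lam i

/-- The normalized elementary symmetric function `p k = σ k / C(n,k)`. -/
noncomputable def p {n : ℕ} (k : ℕ) (lam : Fin n → ℝ) : ℝ :=
  esymm k lam / (n.choose k)

open Polynomial in
lemma card_roots_le_iterate_derivative (q : Polynomial ℝ) (m : ℕ) :
    Multiset.card q.roots ≤ Multiset.card ((derivative (R := ℝ))^[m] q).roots + m := by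
  induction m generalizing q with
  | zero => simp
  | succ m ih =>
    calc Multiset.card q.roots ≤ Multiset.card (derivative q).roots + 1 :=
          q.card_roots_le_derivative
    _ ≤ (Multiset.card ((derivative (R := ℝ))^[m] (derivative q)).roots + m) + 1 := by
          exact Nat.add_le_add_right (ih _) 1
    _ = _ := by rw [Function.iterate_succ_apply]; ring

lemma cubic_disc_aux (a b c : ℝ) (h : a + b + c = 0) :
    27 * (a * b * c) ^ 2 + 4 * (a * b + a * c + b * c) ^ 3 ≤ 0 := by
  have hc : c = -a - b := by linarith
  subst hc
  nlinarith [sq_nonneg ((a - b) * (2 * a + b) * (a + 2 * b))]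

theorem p3_sq_add_four_p2_cubed_nonpos (n : ℕ) (hn : 3 ≤ n) (lam : Fin n → ℝ)
    (hsum : ∑ i, lam i = 0) :
    p 3 lam ^ 2 + 4 * p 2 lam ^ 3 ≤ 0 := by
  classical
  open Polynomial in
  -- bridge between our esymm and Multiset.esymm
  have hesymm : ∀ k, (Multiset.map lam univ.val).esymm k = esymm k lam := by
    intro k
    rw [Finset.esymm_map_val]
    rfl
  set f : Polynomial ℝ := ∏ i, (X - C (lam i)) with hf
  have hmonic : f.Monic := monic_prod_of_monic _ _ fun i _ => monic_X_sub_C _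
  have hdegf : f.natDegree = n := by
    rw [hf, natDegree_prod _ _ fun i _ => X_sub_C_ne_zero _]
    simp
  have hfprod : ((Multiset.map lam univ.val).map fun t => X - C t).prod = f := by
    rw [Multiset.map_map, hf]
    rfl
  have hroots_f : f.roots = Multiset.map lam univ.val := by
    rw [← hfprod]; exact roots_multiset_prod_X_sub_C _
  have hcardmap : Multiset.card (Multiset.map lam univ.val) = n := by simp
  have hcoef : ∀ k, k ≤ n → f.coeff (n - k) = (-1) ^ k * esymm k lam := by
    intro k hk
    have h1 : n - k ≤ Multiset.card (Multiset.map lam univ.val) := by omega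
    have := Multiset.prod_X_sub_C_coeff (Multiset.map lam univ.val) h1
    rw [hfprod, hcardmap] at this
    rw [this, show n - (n - k) = k by omega, hesymm]
  -- esymm 1 = 0
  have he1 : esymm 1 lam = 0 := by
    rw [show esymm 1 lam = ∑ s ∈ (Finset.univ : Finset (Fin n)).powersetCard 1,
        ∏ i ∈ s, lam i from rfl]
    rw [Finset.powersetCard_one]
    simpa using hsum
  set m : ℕ := n - 3 with hm
  set g : Polynomial ℝ := (derivative (R := ℝ))^[m] f with hg
  have hgcoeff : ∀ j, g.coeff j = ((j + m).descFactorial m : ℝ) * f.coeff (j + m) := by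
    intro j
    rw [hg, Polynomial.coeff_iterate_derivative, nsmul_eq_mul]
  have hDpos : 0 < n.descFactorial m := by
    have hne : n.descFactorial m ≠ 0 := by
      rw [Ne, Nat.descFactorial_eq_zero_iff_lt]; omega
    exact Nat.pos_of_ne_zero hne
  have hgc3 : g.coeff 3 = (n.descFactorial m : ℝ) := by
    rw [hgcoeff, show 3 + m = n by omega]
    rw [show f.coeff n = 1 by rw [← hdegf]; exact hmonic.coeff_natDegree]
    ring
  have hg3ne : g.coeff 3 ≠ 0 := by
    rw [hgc3]
    exact_mod_cast hDpos.ne'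
  have hdegg_le : g.natDegree ≤ 3 := by
    have h := Polynomial.natDegree_iterate_derivative f m
    rw [← hg, hdegf] at h
    omega
  have hdegg : g.natDegree = 3 :=
    le_antisymm hdegg_le (Polynomial.le_natDegree_of_ne_zero hg3ne)
  have hcard_ge : 3 ≤ Multiset.card g.roots := by
    have h1 := card_roots_le_iterate_derivative f m
    rw [← hg] at h1
    rw [hroots_f, hcardmap] at h1
    omega
  have hcardg : Multiset.card g.roots = 3 :=
    le_antisymm (by rw [← hdegg]; exact g.card_roots') hcard_ge
  obtain ⟨a, b, c, habc⟩ := Multiset.card_eq_three.mp hcardg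
  have hsplit := Polynomial.C_leadingCoeff_mul_prod_multiset_X_sub_C
    (p := g) (by rw [hcardg, hdegg])
  rw [habc] at hsplit
  have hlead : g.leadingCoeff = (n.descFactorial m : ℝ) := by
    rw [Polynomial.leadingCoeff, hdegg, hgc3]
  rw [hlead] at hsplit
  simp only [Multiset.insert_eq_cons, Multiset.map_cons, Multiset.map_singleton,
    Multiset.prod_cons, Multiset.prod_singleton] at hsplit
  have hexpand : (X - C a) * ((X - C b) * (X - C c)) =
      X ^ 3 - C a * X ^ 2 - C b * X ^ 2 - C c * X ^ 2 + C (a * b) * X + C (a * c) * X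
        + C (b * c) * X - C (a * b * c) := by
    simp only [C_mul]; ring
  have hcoeffg : ∀ j, g.coeff j = (n.descFactorial m : ℝ) *
      ((X ^ 3 - C a * X ^ 2 - C b * X ^ 2 - C c * X ^ 2 + C (a * b) * X + C (a * c) * X
        + C (b * c) * X - C (a * b * c) : Polynomial ℝ).coeff j) := by
    intro j
    rw [← hexpand, ← Polynomial.coeff_C_mul, ← hsplit]
  -- coefficient 2 : a+b+c = 0
  have hD : (0 : ℝ) < (n.descFactorial m : ℝ) := by exact_mod_cast hDpos
  have e2coef : g.coeff 2 = (n.descFactorial m : ℝ) * (-(a + b + c)) := by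
    rw [hcoeffg]
    simp only [Polynomial.coeff_add, Polynomial.coeff_sub, Polynomial.coeff_C_mul,
      Polynomial.coeff_X_pow, Polynomial.coeff_X, Polynomial.coeff_C]
    norm_num
    try ring
    try exact Or.inl trivial
  have e1coef : g.coeff 1 = (n.descFactorial m : ℝ) * (a * b + a * c + b * c) := by
    rw [hcoeffg]
    simp only [Polynomial.coeff_add, Polynomial.coeff_sub, Polynomial.coeff_C_mul,
      Polynomial.coeff_X_pow, Polynomial.coeff_X, Polynomial.coeff_C]
    norm_num
    try ring
    try exact Or.inl trivial
  have e0coef : g.coeff 0 = (n.descFactorial m : ℝ) * (-(a * b * c)) := by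
    rw [hcoeffg]
    simp only [Polynomial.coeff_add, Polynomial.coeff_sub, Polynomial.coeff_C_mul,
      Polynomial.coeff_X_pow, Polynomial.coeff_X, Polynomial.coeff_C]
    norm_num
    try ring
    try exact Or.inl trivial
  -- from f-side
  have f2 : g.coeff 2 = 0 := by
    rw [hgcoeff, show 2 + m = n - 1 by omega, hcoef 1 (by omega), he1]
    ring
  have f1 : g.coeff 1 = ((n - 2).descFactorial m : ℝ) * esymm 2 lam := by
    rw [hgcoeff, show 1 + m = n - 2 by omega, hcoef 2 (by omega)]
    ring
  have f0 : g.coeff 0 = (Nat.factorial m : ℝ) * (-(esymm 3 lam)) := by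
    rw [hgcoeff, show 0 + m = n - 3 by omega, hcoef 3 (by omega), hm,
      Nat.descFactorial_self]
    ring
  have hsum_abc : a + b + c = 0 := by
    have := e2coef.symm.trans f2
    have h := mul_eq_zero.mp this
    rcases h with h | h
    · exact absurd h hD.ne'
    · linarith
  -- natural number identities
  have hI2 : Nat.factorial m * n.choose 3 = n.descFactorial m := by
    rw [Nat.descFactorial_eq_factorial_mul_choose, hm,
      Nat.choose_symm hn]
  have hI1 : (n - 2).descFactorial m * n.choose 2 = 3 * n.descFactorial m := by
    have hA : (n - 2).choose (n - 3) = n - 2 := by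
      rw [show n - 3 = (n - 2) - 1 by omega, Nat.choose_symm (by omega : 1 ≤ n - 2),
        Nat.choose_one_right]
    have hB : n.choose (n - 3) = n.choose 3 := Nat.choose_symm hn
    have h3 : n.choose 3 * 3 = n.choose 2 * (n - 2) := Nat.choose_succ_right_eq n 2
    rw [hm, Nat.descFactorial_eq_factorial_mul_choose (n - 2) (n - 3), hA,
      Nat.descFactorial_eq_factorial_mul_choose n (n - 3), hB]
    calc Nat.factorial (n - 3) * (n - 2) * n.choose 2
        = Nat.factorial (n - 3) * (n.choose 2 * (n - 2)) := by ring
      _ = Nat.factorial (n - 3) * (n.choose 3 * 3) := by rw [← h3]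
      _ = 3 * (Nat.factorial (n - 3) * n.choose 3) := by ring
  have hC2pos : 0 < n.choose 2 := Nat.choose_pos (by omega)
  have hC3pos : 0 < n.choose 3 := Nat.choose_pos hn
  -- derive e2 = 3 p2, e3 = p3
  have hp2 : a * b + a * c + b * c = 3 * p 2 lam := by
    have h1 := e1coef.symm.trans f1
    have h2 : esymm 2 lam = p 2 lam * (n.choose 2 : ℝ) := by
      rw [p]; field_simp
    rw [h2] at h1
    have hI1' : ((n - 2).descFactorial m : ℝ) * (n.choose 2 : ℝ)
        = 3 * (n.descFactorial m : ℝ) := by exact_mod_cast congrArg (Nat.cast : ℕ → ℝ) hI1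
    exact mul_left_cancel₀ hD.ne' (show (n.descFactorial m : ℝ) * (a*b + a*c + b*c)
        = (n.descFactorial m : ℝ) * (3 * p 2 lam) by
      linear_combination h1 + p 2 lam * hI1')
  have hp3 : a * b * c = p 3 lam := by
    have h1 := e0coef.symm.trans f0
    have h2 : esymm 3 lam = p 3 lam * (n.choose 3 : ℝ) := by
      rw [p]; field_simp
    rw [h2] at h1
    have hI2' : (Nat.factorial m : ℝ) * (n.choose 3 : ℝ)
        = (n.descFactorial m : ℝ) := by exact_mod_cast congrArg (Nat.cast : ℕ → ℝ) hI2
    exact mul_left_cancel₀ hD.ne' (show (n.descFactorial m : ℝ) * (a*b*c)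
        = (n.descFactorial m : ℝ) * (p 3 lam) by
      linear_combination (-1 : ℝ) * h1 + p 3 lam * hI2')
  have key := cubic_disc_aux a b c hsum_abc
  rw [hp2, hp3] at key
  nlinarith [key]
end

section
/- Let n ≥ 3 and let λ₁, …, λₙ be real numbers with λ₁ + ⋯ + λₙ = 0. Writing pₖ = σₖ(λ)/C(n,k), equality p₃² + 4p₂³ = 0 holds if and only if at least n − 1 of the numbers λ₁, …, λₙ are equal to one another. -/
open Finset

lemma eval_esymm (n : ℕ) (lam : Fin n → ℝ) (k : ℕ) :
    MvPolynomial.eval lam (MvPolynomial.esymm (Fin n) ℝ k) = esymm k lam := by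
  simp [MvPolynomial.esymm, esymm]

lemma sum_sq_eq (n : ℕ) (lam : Fin n → ℝ) :
    ∑ i, lam i ^ 2 = (∑ i, lam i)^2 - 2 * esymm 2 lam := by
  have h := congrArg (MvPolynomial.eval lam)
    (MvPolynomial.psum_eq_mul_esymm_sub_sum (Fin n) ℝ 2 (by norm_num))
  rw [Finset.sum_filter] at h
  rw [Finset.Nat.sum_antidiagonal_eq_sum_range_succ_mk] at h
  simp [Finset.sum_range_succ, MvPolynomial.psum, MvPolynomial.esymm_one, eval_esymm,
    Set.mem_Ioo] at h
  linarith [h]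

lemma sum_cube_eq (n : ℕ) (lam : Fin n → ℝ) :
    ∑ i, lam i ^ 3 = 3 * esymm 3 lam + (∑ i, lam i) * (∑ i, lam i ^ 2)
      - esymm 2 lam * (∑ i, lam i) := by
  have h := congrArg (MvPolynomial.eval lam)
    (MvPolynomial.psum_eq_mul_esymm_sub_sum (Fin n) ℝ 3 (by norm_num))
  rw [Finset.sum_filter] at h
  rw [Finset.Nat.sum_antidiagonal_eq_sum_range_succ_mk] at h
  simp [Finset.sum_range_succ, MvPolynomial.psum, MvPolynomial.esymm_one, eval_esymm,
    Set.mem_Ioo] at h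
  linarith [h]


lemma sum_expand {n : ℕ} (lam : Fin n → ℝ) (a b : ℝ) :
    ∑ i, (lam i + a) * (lam i - b)^2
      = (∑ i, lam i^3) + (a - 2*b) * (∑ i, lam i^2)
        + (b^2 - 2*a*b) * (∑ i, lam i) + (n:ℝ) * (a*b^2) := by
  have he : ∀ i : Fin n, (lam i + a) * (lam i - b)^2
      = lam i^3 + (a-2*b)*lam i^2 + (b^2-2*a*b)*lam i + a*b^2 := fun i => by ring
  rw [Finset.sum_congr rfl fun i _ => he i]
  rw [Finset.sum_add_distrib, Finset.sum_add_distrib, Finset.sum_add_distrib,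
    ← Finset.mul_sum, ← Finset.mul_sum, Finset.sum_const, Finset.card_univ,
    Fintype.card_fin, nsmul_eq_mul]

lemma sum_expand' {n : ℕ} (lam : Fin n → ℝ) (a b : ℝ) :
    ∑ i, (a - lam i) * (lam i + b)^2
      = -(∑ i, lam i^3) + (a - 2*b) * (∑ i, lam i^2)
        + (2*a*b - b^2) * (∑ i, lam i) + (n:ℝ) * (a*b^2) := by
  have he : ∀ i : Fin n, (a - lam i) * (lam i + b)^2
      = -lam i^3 + (a-2*b)*lam i^2 + (2*a*b-b^2)*lam i + a*b^2 := fun i => by ring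
  rw [Finset.sum_congr rfl fun i _ => he i]
  rw [Finset.sum_add_distrib, Finset.sum_add_distrib, Finset.sum_add_distrib,
    ← Finset.mul_sum, ← Finset.mul_sum, Finset.sum_const, Finset.card_univ,
    Fintype.card_fin, nsmul_eq_mul]
  rw [Finset.sum_neg_distrib]

lemma sum_split {n : ℕ} (i₀ : Fin n) (f : Fin n → ℝ) (v : ℝ) (h : ∀ j, j ≠ i₀ → f j = v) :
    ∑ i, f i = f i₀ + ((n:ℝ) - 1) * v := by
  have h1 : 1 ≤ n := i₀.pos
  rw [← Finset.add_sum_erase _ f (Finset.mem_univ i₀)]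
  congr 1
  rw [Finset.sum_congr rfl (fun j hj => h j (Finset.ne_of_mem_erase hj)),
    Finset.sum_const, Finset.card_erase_of_mem (Finset.mem_univ i₀), Finset.card_univ,
    Fintype.card_fin, nsmul_eq_mul, Nat.cast_sub h1, Nat.cast_one]

lemma exists_outlier {n : ℕ} (hn : 3 ≤ n) (lam : Fin n → ℝ) (c : ℝ)
    (h : n - 1 ≤ (Finset.univ.filter fun i => lam i = c).card) :
    ∃ i₀ : Fin n, ∀ j, j ≠ i₀ → lam j = c := by
  have : Nonempty (Fin n) := ⟨⟨0, by omega⟩⟩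
  classical
  have hle1 : (Finset.univ.filter fun i => ¬ lam i = c).card ≤ 1 := by
    have hsplit := Finset.card_filter_add_card_filter_not
      (s := (Finset.univ : Finset (Fin n))) (p := fun i => lam i = c)
    rw [Finset.card_univ, Fintype.card_fin] at hsplit
    have hle := Finset.card_filter_le (Finset.univ : Finset (Fin n)) (fun i => lam i = c)
    rw [Finset.card_univ, Fintype.card_fin] at hle
    omega
  obtain ⟨i₀, hsub⟩ := Finset.card_le_one_iff_subset_singleton.mp hle1
  refine ⟨i₀, fun j hj => ?_⟩
  by_contra hne
  have hmem : j ∈ Finset.univ.filter fun i => ¬ lam i = c := by simp [hne]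
  have := hsub hmem
  simp at this
  exact hj this

lemma bound_lemma {n : ℕ} (hn : 3 ≤ n) (lam : Fin n → ℝ) (hsum : ∑ i, lam i = 0)
    (i : Fin n) : (n:ℝ) * lam i ^ 2 ≤ ((n:ℝ)-1) * ∑ j, lam j ^ 2 := by
  have hmem := Finset.mem_univ i
  have hCS := sq_sum_le_card_mul_sum_sq (s := Finset.univ.erase i) (f := lam)
  have hs1 : ∑ j ∈ Finset.univ.erase i, lam j = -lam i := by
    have := Finset.add_sum_erase _ lam hmem
    rw [hsum] at this; linarith
  have hs2 : ∑ j ∈ Finset.univ.erase i, lam j ^ 2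
      = (∑ j, lam j ^ 2) - lam i ^ 2 := by
    have := Finset.add_sum_erase _ (fun j => lam j ^ 2) hmem
    linarith
  rw [hs1, hs2, Finset.card_erase_of_mem hmem, Finset.card_univ, Fintype.card_fin] at hCS
  have hcast : ((n - 1 : ℕ) : ℝ) = (n:ℝ) - 1 := by
    rw [Nat.cast_sub (by omega), Nat.cast_one]
  rw [hcast] at hCS
  nlinarith [hCS]

lemma case_aux {n : ℕ} (hn : 3 ≤ n) (lam : Fin n → ℝ) (hsum : ∑ i, lam i = 0)
    (M c : ℝ) (hM : 0 < M) (hc : 0 < c) (h2M : (∑ i, lam i^2) < 2*M^2)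
    (hdichot : ∀ i, lam i = -M ∨ lam i = c) :
    ∃ c' : ℝ, n - 1 ≤ (Finset.univ.filter fun i => lam i = c').card := by
  have hex : ∃ i₀ : Fin n, lam i₀ = -M := by
    by_contra hno
    push_neg at hno
    have hallc : ∀ i, lam i = c := fun i => (hdichot i).resolve_left (hno i)
    have h0 : (0:ℝ) = (n:ℝ) * c := by
      rw [← hsum, Finset.sum_congr rfl fun i _ => hallc i, Finset.sum_const,
        Finset.card_univ, Fintype.card_fin, nsmul_eq_mul]
    have hn' : (3:ℝ) ≤ (n:ℝ) := by exact_mod_cast hn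
    nlinarith
  obtain ⟨i₀, hi₀⟩ := hex
  refine ⟨c, ?_⟩
  have hsub : Finset.univ.erase i₀ ⊆ Finset.univ.filter (fun i => lam i = c) := by
    intro j hj
    rcases hdichot j with hjM | hjc
    · exfalso
      have hj' : j ≠ i₀ := Finset.ne_of_mem_erase hj
      have hpair : lam i₀ ^ 2 + lam j ^ 2 ≤ ∑ i, lam i ^ 2 := by
        have hss : ({i₀, j} : Finset (Fin n)) ⊆ Finset.univ := Finset.subset_univ _
        have := Finset.sum_le_sum_of_subset_of_nonneg hss
          (fun i _ _ => sq_nonneg (lam i))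
        rwa [Finset.sum_pair (Ne.symm hj')] at this
      rw [hi₀, hjM] at hpair
      nlinarith
    · simp [hjc]
  calc n - 1 = (Finset.univ.erase i₀).card := by
        rw [Finset.card_erase_of_mem (Finset.mem_univ i₀), Finset.card_univ, Fintype.card_fin]
    _ ≤ _ := Finset.card_le_card hsub

set_option maxHeartbeats 1000000 in
lemma key {n : ℕ} (hn : 3 ≤ n) (lam : Fin n → ℝ) (hsum : ∑ i, lam i = 0) :
    (n:ℝ)*((n:ℝ)-1) * (∑ i, lam i ^ 3)^2 = ((n:ℝ)-2)^2 * (∑ i, lam i ^ 2)^3 ↔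
      ∃ c : ℝ, n - 1 ≤ (Finset.univ.filter fun i => lam i = c).card := by
  have hN3 : (3:ℝ) ≤ (n:ℝ) := by exact_mod_cast hn
  constructor
  · intro h
    obtain ⟨q, hqdef⟩ : ∃ q, ∑ i, lam i ^ 2 = q := ⟨_, rfl⟩
    obtain ⟨s, hsdef⟩ : ∃ s, ∑ i, lam i ^ 3 = s := ⟨_, rfl⟩
    rw [hqdef, hsdef] at h
    have hq0 : 0 ≤ q := hqdef ▸ Finset.sum_nonneg fun i _ => sq_nonneg _
    rcases eq_or_lt_of_le hq0 with hq | hq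
    · refine ⟨0, ?_⟩
      have hall : Finset.univ.filter (fun i => lam i = (0:ℝ)) = Finset.univ := by
        ext i
        simp only [Finset.mem_filter, Finset.mem_univ, true_and, iff_true]
        have hz := (Finset.sum_eq_zero_iff_of_nonneg
          (fun i (_ : i ∈ Finset.univ) => sq_nonneg (lam i))).mp
          (by rw [hqdef, ← hq]) i (Finset.mem_univ i)
        exact pow_eq_zero_iff (two_ne_zero) |>.mp hz
      rw [hall, Finset.card_univ, Fintype.card_fin]
      omega
    · -- q > 0
      have hNpos : (0:ℝ) < (n:ℝ) := by linarith
      have hN1 : (0:ℝ) < (n:ℝ) - 1 := by linarith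
      have hN2 : (0:ℝ) < (n:ℝ) - 2 := by linarith
      obtain ⟨M, hMpos, hM2⟩ : ∃ M : ℝ, 0 < M ∧ M^2 = ((n:ℝ)-1)*q/(n:ℝ) := by
        refine ⟨Real.sqrt (((n:ℝ)-1)*q/(n:ℝ)), Real.sqrt_pos.mpr ?_, Real.sq_sqrt ?_⟩
        · exact div_pos (mul_pos hN1 hq) hNpos
        · exact le_of_lt (div_pos (mul_pos hN1 hq) hNpos)
      have hNM : (n:ℝ)*M^2 = ((n:ℝ)-1)*q := by
        rw [hM2]; field_simp
      obtain ⟨c, hcpos, hcdef⟩ : ∃ c : ℝ, 0 < c ∧ c = q/((n:ℝ)*M) :=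
        ⟨_, div_pos hq (mul_pos hNpos hMpos), rfl⟩
      have habs : ∀ i, -M ≤ lam i ∧ lam i ≤ M := by
        intro i
        have hb := bound_lemma hn lam hsum i
        rw [hqdef] at hb
        have hsq : lam i ^ 2 ≤ M ^ 2 := by nlinarith
        constructor
        · nlinarith [sq_nonneg (lam i + M)]
        · nlinarith [sq_nonneg (lam i - M)]
      have halg : (M-2*c)*q + (n:ℝ)*(M*c^2) = M*q*((n:ℝ)-2)/((n:ℝ)-1) := by
        rw [hcdef]
        have h1 : (n:ℝ) ≠ 0 := ne_of_gt hNpos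
        have h2 : (n:ℝ) - 1 ≠ 0 := ne_of_gt hN1
        have h3 : M ≠ 0 := ne_of_gt hMpos
        field_simp
        linear_combination hNM
      have hK2 : (M*q*((n:ℝ)-2)/((n:ℝ)-1))^2 = ((n:ℝ)-2)^2*q^3/((n:ℝ)*((n:ℝ)-1)) := by
        have h1 : (n:ℝ) ≠ 0 := ne_of_gt hNpos
        have h2 : (n:ℝ) - 1 ≠ 0 := ne_of_gt hN1
        field_simp
        linear_combination hNM
      have hT : ∑ i, (lam i + M)*(lam i - c)^2 = s + M*q*((n:ℝ)-2)/((n:ℝ)-1) := by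
        rw [sum_expand lam M c, hqdef, hsdef, hsum]
        linarith [halg]
      have hT' : ∑ i, (M - lam i)*(lam i + c)^2 = M*q*((n:ℝ)-2)/((n:ℝ)-1) - s := by
        rw [sum_expand' lam M c, hqdef, hsdef, hsum]
        linarith [halg]
      have hss : s^2 = (M*q*((n:ℝ)-2)/((n:ℝ)-1))^2 := by
        rw [hK2, eq_div_iff (by positivity)]
        linarith [h]
      have hprod : (∑ i, (lam i + M)*(lam i - c)^2) * (∑ i, (M - lam i)*(lam i + c)^2) = 0 := by
        rw [hT, hT']
        linear_combination -hss
      have h2Mq : q < 2*M^2 := by nlinarith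
      rcases mul_eq_zero.mp hprod with hT0 | hT0
      · have hzero := (Finset.sum_eq_zero_iff_of_nonneg
          (fun i (_ : i ∈ Finset.univ) =>
            mul_nonneg (by linarith [(habs i).1]) (sq_nonneg (lam i - c)))).mp hT0
        have hdichot : ∀ i, lam i = -M ∨ lam i = c := by
          intro i
          rcases mul_eq_zero.mp (hzero i (Finset.mem_univ i)) with h1 | h1
          · left; linarith
          · right
            have := pow_eq_zero_iff (two_ne_zero) |>.mp h1
            linarith
        exact case_aux hn lam hsum M c hMpos hcpos (by rw [hqdef]; exact h2Mq) hdichot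
      · have hzero := (Finset.sum_eq_zero_iff_of_nonneg
          (fun i (_ : i ∈ Finset.univ) =>
            mul_nonneg (by linarith [(habs i).2]) (sq_nonneg (lam i + c)))).mp hT0
        have hdichot : ∀ i, (-lam i) = -M ∨ (-lam i) = c := by
          intro i
          rcases mul_eq_zero.mp (hzero i (Finset.mem_univ i)) with h1 | h1
          · left; linarith
          · right
            have := pow_eq_zero_iff (two_ne_zero) |>.mp h1
            linarith
        have hsum' : ∑ i, (-lam i) = 0 := by rw [Finset.sum_neg_distrib, hsum, neg_zero]
        have hq' : (∑ i, (-lam i)^2) = q := by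
          rw [← hqdef]; exact Finset.sum_congr rfl fun i _ => by ring
        obtain ⟨c', hc'⟩ := case_aux hn (fun i => -lam i) hsum' M c hMpos hcpos
          (by rw [hq']; exact h2Mq) hdichot
        refine ⟨-c', ?_⟩
        have hfe : (Finset.univ.filter fun i => -lam i = c')
            = (Finset.univ.filter fun i => lam i = -c') := by
          ext i
          simp only [Finset.mem_filter, Finset.mem_univ, true_and]
          constructor
          · intro h'; linarith
          · intro h'; rw [h']; ring
        rwa [hfe] at hc'
  · rintro ⟨c, hc⟩
    obtain ⟨i₀, hall⟩ := exists_outlier hn lam c hc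
    have h0 : lam i₀ = -((n:ℝ)-1)*c := by
      have := sum_split i₀ lam c hall
      rw [hsum] at this; linarith
    have hq : ∑ i, lam i ^ 2 = (-((n:ℝ)-1)*c)^2 + ((n:ℝ)-1)*c^2 := by
      have := sum_split i₀ (fun i => lam i ^ 2) (c^2) (fun j hj => by
        rw [hall j hj])
      rw [this, h0]
    have hs : ∑ i, lam i ^ 3 = (-((n:ℝ)-1)*c)^3 + ((n:ℝ)-1)*c^3 := by
      have := sum_split i₀ (fun i => lam i ^ 3) (c^3) (fun j hj => by
        rw [hall j hj])
      rw [this, h0]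
    rw [hq, hs]
    ring

theorem p3_sq_add_four_p2_cubed_eq_zero_iff (n : ℕ) (hn : 3 ≤ n) (lam : Fin n → ℝ)
    (hsum : ∑ i, lam i = 0) :
    p 3 lam ^ 2 + 4 * p 2 lam ^ 3 = 0 ↔
      ∃ c : ℝ, n - 1 ≤ (Finset.univ.filter fun i => lam i = c).card := by
  have hN3 : (3:ℝ) ≤ (n:ℝ) := by exact_mod_cast hn
  have hNpos : (0:ℝ) < n := by linarith
  have hN1 : (0:ℝ) < (n:ℝ)-1 := by linarith
  have hN2 : (0:ℝ) < (n:ℝ)-2 := by linarith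
  have he2 : esymm 2 lam = -(∑ i, lam i^2)/2 := by
    have := sum_sq_eq n lam; rw [hsum] at this; linarith
  have he3 : esymm 3 lam = (∑ i, lam i^3)/3 := by
    have := sum_cube_eq n lam; rw [hsum] at this; linarith
  have hc2 : ((n.choose 2 : ℕ) : ℝ) = (n:ℝ)*((n:ℝ)-1)/2 := Nat.cast_choose_two ℝ n
  have hc3 : ((n.choose 3 : ℕ) : ℝ) = (n:ℝ)*((n:ℝ)-1)*((n:ℝ)-2)/6 := by
    have h := Nat.choose_succ_right_eq n 2
    have hcast : ((n - 2 : ℕ) : ℝ) = (n:ℝ) - 2 := by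
      rw [Nat.cast_sub (by omega)]; norm_num
    have h' : ((n.choose 3 : ℕ) : ℝ) * 3 = ((n.choose 2 : ℕ) : ℝ) * ((n:ℝ) - 2) := by
      rw [← hcast]
      exact_mod_cast congrArg (fun m : ℕ => (m : ℝ)) h
    rw [hc2] at h'
    linarith
  have hp2 : p 2 lam = -(∑ i, lam i^2)/((n:ℝ)*((n:ℝ)-1)) := by
    simp only [p]
    rw [he2, hc2]
    rw [div_eq_div_iff (by positivity) (by positivity)]
    ring
  have hp3 : p 3 lam = 2*(∑ i, lam i^3)/((n:ℝ)*((n:ℝ)-1)*((n:ℝ)-2)) := by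
    simp only [p]
    rw [he3, hc3]
    rw [div_eq_div_iff (by positivity) (by positivity)]
    ring
  have hfact : p 3 lam ^ 2 + 4 * p 2 lam ^ 3
      = ((n:ℝ)*((n:ℝ)-1)*(∑ i, lam i^3)^2 - ((n:ℝ)-2)^2*(∑ i, lam i^2)^3)
        * (4/((n:ℝ)^3*((n:ℝ)-1)^3*((n:ℝ)-2)^2)) := by
    rw [hp2, hp3]
    field_simp
    ring
  rw [hfact, mul_eq_zero]
  have hne : (4/((n:ℝ)^3*((n:ℝ)-1)^3*((n:ℝ)-2)^2)) ≠ 0 := by positivity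
  rw [or_iff_left hne, sub_eq_zero]
  exact key hn lam hsum
end

section
/- Let n ≥ 4 and let λ₁, …, λₙ be real numbers with λ₁ + ⋯ + λₙ = 0. Writing pₖ = σₖ(λ)/C(n,k), one has p₄ + 3p₂² ≥ 0. -/
open Finset

lemma esymm_eq_aeval {n k : ℕ} (lam : Fin n → ℝ) :
    esymm k lam = MvPolynomial.aeval lam (MvPolynomial.esymm (Fin n) ℝ k) := by
  simp [esymm, MvPolynomial.esymm, map_sum]

lemma newton_eval {n : ℕ} (lam : Fin n → ℝ) (k : ℕ) (h : 0 < k) :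
    ∑ i, lam i ^ k = (-1 : ℝ) ^ (k + 1) * k * esymm k lam -
      ∑ a ∈ Finset.HasAntidiagonal.antidiagonal k with a.1 ∈ Set.Ioo 0 k,
        (-1 : ℝ) ^ a.1 * esymm a.1 lam * ∑ i, lam i ^ a.2 := by
  have := congrArg (MvPolynomial.aeval lam)
    (MvPolynomial.psum_eq_mul_esymm_sub_sum (Fin n) ℝ k h)
  simpa [MvPolynomial.psum, map_sum, esymm_eq_aeval] using this

lemma esymm_one_eval {n : ℕ} (lam : Fin n → ℝ) : esymm 1 lam = ∑ i, lam i := by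
  have h := newton_eval lam 1 one_pos
  rw [Finset.sum_filter, Nat.sum_antidiagonal_eq_sum_range_succ_mk] at h
  simp [Finset.sum_range_succ, Set.mem_Ioo] at h
  linarith

lemma esymm_two_eval {n : ℕ} (lam : Fin n → ℝ) (h1 : ∑ i, lam i = 0) :
    esymm 2 lam = -(∑ i, lam i ^ 2) / 2 := by
  have h := newton_eval lam 2 two_pos
  rw [Finset.sum_filter, Nat.sum_antidiagonal_eq_sum_range_succ_mk] at h
  simp [Finset.sum_range_succ, Set.mem_Ioo, h1] at h
  linarith

lemma esymm_four_eval {n : ℕ} (lam : Fin n → ℝ) (h1 : ∑ i, lam i = 0) :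
    esymm 4 lam = (∑ i, lam i ^ 2) ^ 2 / 8 - (∑ i, lam i ^ 4) / 4 := by
  have he1 : esymm 1 lam = 0 := by rw [esymm_one_eval, h1]
  have he2 := esymm_two_eval lam h1
  have h := newton_eval lam 4 (by norm_num)
  rw [Finset.sum_filter, Nat.sum_antidiagonal_eq_sum_range_succ_mk] at h
  simp [Finset.sum_range_succ, Set.mem_Ioo, h1, he1, he2] at h
  linarith

lemma sum_poly4 {n : ℕ} (x : Fin n → ℝ) (c4 c3 c2 c1 c0 : ℝ) :
    ∑ j, (c4 * x j ^ 4 + c3 * x j ^ 3 + c2 * x j ^ 2 + c1 * x j + c0)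
      = c4 * (∑ j, x j ^ 4) + c3 * (∑ j, x j ^ 3) + c2 * (∑ j, x j ^ 2)
        + c1 * (∑ j, x j) + n * c0 := by
  simp [Finset.sum_add_distrib, ← Finset.mul_sum, Finset.card_univ, mul_comm]

lemma double_sum_eq {n : ℕ} (x : Fin n → ℝ) (A B C : ℝ) (h1 : ∑ i, x i = 0) :
    ∑ i, ∑ j, (A * (x i ^ 2 + x j ^ 2) + B * (x i * x j) + C) ^ 2
      = 2 * n * A ^ 2 * (∑ i, x i ^ 4) + (2 * A ^ 2 + B ^ 2) * (∑ i, x i ^ 2) ^ 2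
        + 4 * n * A * C * (∑ i, x i ^ 2) + n ^ 2 * C ^ 2 := by
  have inner : ∀ i : Fin n, ∑ j, (A * (x i ^ 2 + x j ^ 2) + B * (x i * x j) + C) ^ 2
      = (n * A ^ 2) * x i ^ 4 + (0:ℝ) * x i ^ 3
        + ((B ^ 2 + 2 * A ^ 2) * (∑ j, x j ^ 2) + 2 * n * A * C) * x i ^ 2
        + (2 * A * B * (∑ j, x j ^ 3)) * x i
        + (A ^ 2 * (∑ j, x j ^ 4) + 2 * A * C * (∑ j, x j ^ 2) + n * C ^ 2) := by
    intro i
    rw [show (∑ j, (A * (x i ^ 2 + x j ^ 2) + B * (x i * x j) + C) ^ 2)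
        = ∑ j, ((A ^ 2) * x j ^ 4 + (2 * A * B * x i) * x j ^ 3
          + (B ^ 2 * x i ^ 2 + 2 * A ^ 2 * x i ^ 2 + 2 * A * C) * x j ^ 2
          + (2 * A * B * x i ^ 3 + 2 * B * C * x i) * x j
          + (A * x i ^ 2 + C) ^ 2)
      from Finset.sum_congr rfl fun j _ => by ring]
    rw [sum_poly4, h1]
    ring
  rw [Finset.sum_congr rfl fun i _ => inner i, sum_poly4, h1]
  ring

lemma diag_sum_eq {n : ℕ} (x : Fin n → ℝ) (D C : ℝ) :
    ∑ i, (D * x i ^ 2 + C) ^ 2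
      = D ^ 2 * (∑ i, x i ^ 4) + 2 * D * C * (∑ i, x i ^ 2) + n * C ^ 2 := by
  rw [show (∑ i, (D * x i ^ 2 + C) ^ 2)
      = ∑ i, ((D ^ 2) * x i ^ 4 + (0:ℝ) * x i ^ 3 + (2 * D * C) * x i ^ 2
        + (0:ℝ) * x i + C ^ 2)
    from Finset.sum_congr rfl fun i _ => by ring]
  rw [sum_poly4]
  ring

lemma diag_le_double {n : ℕ} (x : Fin n → ℝ) (A B C : ℝ) :
    ∑ i, ((2 * A + B) * x i ^ 2 + C) ^ 2
      ≤ ∑ i, ∑ j, (A * (x i ^ 2 + x j ^ 2) + B * (x i * x j) + C) ^ 2 := by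
  refine Finset.sum_le_sum fun i _ => ?_
  have h : ((2 * A + B) * x i ^ 2 + C) ^ 2
      = (A * (x i ^ 2 + x i ^ 2) + B * (x i * x i) + C) ^ 2 := by ring
  rw [h]
  exact Finset.single_le_sum
    (f := fun j => (A * (x i ^ 2 + x j ^ 2) + B * (x i * x j) + C) ^ 2)
    (fun j _ => sq_nonneg _) (mem_univ i)

lemma core {n : ℕ} (x : Fin n → ℝ) (h1 : ∑ i, x i = 0) :
    0 ≤ ((n : ℝ) - 1) * ((n : ℝ) - 2) *
      (((n : ℝ) ^ 2 - 3 * (n : ℝ) + 3) * (∑ i, x i ^ 2) ^ 2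
        - (n : ℝ) * ((n : ℝ) - 1) * (∑ i, x i ^ 4)) := by
  have h := diag_le_double x ((n : ℝ) - 1) (((n : ℝ) - 1) * ((n : ℝ) - 2)) (-(∑ i, x i ^ 2))
  rw [double_sum_eq x _ _ _ h1, diag_sum_eq] at h
  nlinarith [h]

lemma choose_four_cast (n : ℕ) (hn : 4 ≤ n) : (n.choose 4 : ℝ) * 24
    = (n:ℝ) * ((n:ℝ) - 1) * ((n:ℝ) - 2) * ((n:ℝ) - 3) := by
  have h := Nat.descFactorial_eq_factorial_mul_choose n 4
  simp [Nat.descFactorial_succ, Nat.factorial] at h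
  have := congrArg (Nat.cast (R := ℝ)) h
  push_cast [Nat.cast_sub (show (1:ℕ) ≤ n by omega), Nat.cast_sub (show (2:ℕ) ≤ n by omega),
    Nat.cast_sub (show (3:ℕ) ≤ n by omega)] at this
  linear_combination -this

lemma choose_two_cast (n : ℕ) (hn : 4 ≤ n) : (n.choose 2 : ℝ) * 2 = (n:ℝ) * ((n:ℝ) - 1) := by
  have h := Nat.descFactorial_eq_factorial_mul_choose n 2
  simp [Nat.descFactorial_succ, Nat.factorial] at h
  have := congrArg (Nat.cast (R := ℝ)) h
  push_cast [Nat.cast_sub (show (1:ℕ) ≤ n by omega)] at this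
  linear_combination -this

theorem p4_add_three_p2_sq_nonneg (n : ℕ) (hn : 4 ≤ n) (lam : Fin n → ℝ)
    (hsum : ∑ i, lam i = 0) :
    0 ≤ p 4 lam + 3 * p 2 lam ^ 2 := by
  have hN : (4:ℝ) ≤ (n:ℝ) := by exact_mod_cast hn
  have hG := core lam hsum
  have hGpos : 0 ≤ ((n:ℝ) ^ 2 - 3 * (n:ℝ) + 3) * (∑ i, lam i ^ 2) ^ 2
      - (n:ℝ) * ((n:ℝ) - 1) * (∑ i, lam i ^ 4) := by
    have hpos : 0 < ((n:ℝ) - 1) * ((n:ℝ) - 2) := by nlinarith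
    nlinarith [hG, hpos, sq_nonneg (((n:ℝ) - 1) * ((n:ℝ) - 2))]
  have hc4 := choose_four_cast n hn
  have hc2 := choose_two_cast n hn
  have hc4pos : (0:ℝ) < (n.choose 4 : ℝ) := by
    exact_mod_cast Nat.cast_pos.mpr (Nat.choose_pos hn)
  have hc2pos : (0:ℝ) < (n.choose 2 : ℝ) := by
    exact_mod_cast Nat.cast_pos.mpr (Nat.choose_pos (by omega : 2 ≤ n))
  have he2 := esymm_two_eval lam hsum
  have he4 := esymm_four_eval lam hsum
  rw [p, p, he2, he4]
  set S2 : ℝ := ∑ i, lam i ^ 2 with hS2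
  set S4 : ℝ := ∑ i, lam i ^ 4 with hS4
  have key : (S2 ^ 2 / 8 - S4 / 4) / (n.choose 4 : ℝ)
      + 3 * (-S2 / 2 / (n.choose 2 : ℝ)) ^ 2
      = 6 * (((n:ℝ) ^ 2 - 3 * (n:ℝ) + 3) * S2 ^ 2 - (n:ℝ) * ((n:ℝ) - 1) * S4)
        / ((n:ℝ) ^ 2 * ((n:ℝ) - 1) ^ 2 * ((n:ℝ) - 2) * ((n:ℝ) - 3)) := by
    have h1 : (n:ℝ) ≠ 0 := by linarith
    have h2 : (n:ℝ) - 1 ≠ 0 := by linarith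
    have h3 : (n:ℝ) - 2 ≠ 0 := by linarith
    have h4 : (n:ℝ) - 3 ≠ 0 := by linarith
    have e4 : (n.choose 4 : ℝ) = (n:ℝ) * ((n:ℝ) - 1) * ((n:ℝ) - 2) * ((n:ℝ) - 3) / 24 := by
      linarith
    have e2 : (n.choose 2 : ℝ) = (n:ℝ) * ((n:ℝ) - 1) / 2 := by linarith
    rw [e4, e2]
    field_simp
    ring
  rw [key]
  apply div_nonneg
  · linarith
  · nlinarith
end

section
/- Let n ≥ 4 and let λ₁, …, λₙ be real numbers with λ₁ + ⋯ + λₙ = 0. Writing pₖ = σₖ(λ)/C(n,k), equality p₄ + 3p₂² = 0 holds if and only if at least n − 1 of the numbers λ₁, …, λₙ are equal to one another. -/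
open Finset

lemma aeval_esymm' {n : ℕ} (lam : Fin n → ℝ) (k : ℕ) :
    (MvPolynomial.aeval lam) (MvPolynomial.esymm (Fin n) ℝ k) = esymm k lam := by
  unfold MvPolynomial.esymm esymm
  simp

lemma aeval_psum' {n : ℕ} (lam : Fin n → ℝ) (k : ℕ) :
    (MvPolynomial.aeval lam) (MvPolynomial.psum (Fin n) ℝ k) = ∑ i, lam i ^ k := by
  unfold MvPolynomial.psum; simp

lemma esymm_two {n : ℕ} (lam : Fin n → ℝ) (hsum : ∑ i, lam i = 0) :
    2 * esymm 2 lam = -(∑ i, lam i ^ 2) := by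
  have h := congrArg (MvPolynomial.aeval lam) (MvPolynomial.mul_esymm_eq_sum (Fin n) ℝ 2)
  simp only [map_mul, map_sum, map_pow, map_neg, map_one, map_ofNat, map_natCast,
    aeval_esymm', aeval_psum'] at h
  rw [Finset.sum_filter, Finset.Nat.sum_antidiagonal_eq_sum_range_succ_mk] at h
  simp [Finset.sum_range_succ, esymm, hsum] at h
  rw [esymm]; linarith

lemma esymm_four {n : ℕ} (lam : Fin n → ℝ) (hsum : ∑ i, lam i = 0) :
    4 * esymm 4 lam = - esymm 2 lam * (∑ i, lam i ^ 2) - (∑ i, lam i ^ 4) := by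
  have h := congrArg (MvPolynomial.aeval lam) (MvPolynomial.mul_esymm_eq_sum (Fin n) ℝ 4)
  simp only [map_mul, map_sum, map_pow, map_neg, map_one, map_ofNat, map_natCast,
    aeval_esymm', aeval_psum'] at h
  rw [Finset.sum_filter, Finset.Nat.sum_antidiagonal_eq_sum_range_succ_mk] at h
  have h1 : esymm 1 lam = ∑ i, lam i := by
    simp [esymm, Finset.powersetCard_one]
  have h0 : esymm 0 lam = 1 := by simp [esymm]
  simp [Finset.sum_range_succ, h0, h1, hsum] at h
  linarith

lemma choose_two_real {n : ℕ} (hn : 4 ≤ n) :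
    (n.choose 2 : ℝ) = (n : ℝ) * ((n : ℝ) - 1) / 2 :=
  Nat.cast_choose_two ℝ n

lemma choose_four_real {n : ℕ} (hn : 4 ≤ n) :
    (n.choose 4 : ℝ) = (n : ℝ) * ((n : ℝ) - 1) * ((n : ℝ) - 2) * ((n : ℝ) - 3) / 24 := by
  have h := Nat.descFactorial_eq_factorial_mul_choose n 4
  have hd : n.descFactorial 4 = (n - 3) * ((n - 2) * ((n - 1) * n)) := by
    simp [Nat.descFactorial]
  rw [hd] at h
  have h1 : 1 ≤ n := by omega
  have h2 : 2 ≤ n := by omega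
  have h3 : 3 ≤ n := by omega
  have := congrArg (fun x : ℕ => (x : ℝ)) h
  push_cast [Nat.cast_sub h1, Nat.cast_sub h2, Nat.cast_sub h3] at this
  have : ((n : ℝ) - 3) * (((n : ℝ) - 2) * (((n : ℝ) - 1) * n)) = 24 * (n.choose 4 : ℝ) := by
    rw [this]; norm_num [Nat.factorial]
  linarith

lemma poly_sum {n : ℕ} (lam : Fin n → ℝ) (c0 c1 c2 c3 c4 : ℝ) :
    ∑ k : Fin n, (c0 + c1 * lam k + c2 * lam k ^ 2 + c3 * lam k ^ 3 + c4 * lam k ^ 4)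
      = n * c0 + c1 * (∑ k, lam k) + c2 * (∑ k, lam k ^ 2) + c3 * (∑ k, lam k ^ 3)
        + c4 * (∑ k, lam k ^ 4) := by
  simp only [Finset.sum_add_distrib, ← Finset.mul_sum, Finset.sum_const, Finset.card_univ,
    Fintype.card_fin, nsmul_eq_mul]

lemma sum_sub_sq {ι : Type*} (S : Finset ι) (a : ι → ℝ) :
    ∑ l ∈ S, ∑ m ∈ S, (a l - a m) ^ 2
      = 2 * S.card * (∑ l ∈ S, a l ^ 2) - 2 * (∑ l ∈ S, a l) ^ 2 := by
  have h1 : ∀ l ∈ S, ∑ m ∈ S, (a l - a m) ^ 2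
      = (S.card : ℝ) * a l ^ 2 - (∑ m ∈ S, a m) * (2 * a l) + ∑ m ∈ S, a m ^ 2 := by
    intro l _
    have h2 : ∀ m ∈ S, (a l - a m) ^ 2 = a l ^ 2 - a m * (2 * a l) + a m ^ 2 :=
      fun m _ => by ring
    rw [Finset.sum_congr rfl h2, Finset.sum_add_distrib, Finset.sum_sub_distrib,
      Finset.sum_const, ← Finset.sum_mul, nsmul_eq_mul]
  rw [Finset.sum_congr rfl h1, Finset.sum_add_distrib, Finset.sum_sub_distrib,
    Finset.sum_const]
  simp only [← Finset.mul_sum, nsmul_eq_mul]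
  ring

lemma T8_eq {n : ℕ} (hn : 4 ≤ n) (lam : Fin n → ℝ) (hsum : ∑ i, lam i = 0) :
    ∑ j, ∑ k, ∑ l ∈ univ \ {j, k}, ∑ m ∈ univ \ {j, k},
        ((lam j - lam k) * (lam l - lam m)) ^ 2
      = 4 * (((n : ℝ) ^ 2 - 3 * n + 3) * (∑ i, lam i ^ 2) ^ 2
          - (n : ℝ) * ((n : ℝ) - 1) * (∑ i, lam i ^ 4)) := by
  set ν : ℝ := (n : ℝ) with hν
  set P2 : ℝ := ∑ i, lam i ^ 2 with hP2
  set P3 : ℝ := ∑ i, lam i ^ 3 with hP3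
  set P4 : ℝ := ∑ i, lam i ^ 4 with hP4
  have hstep : ∀ j k : Fin n,
      ∑ l ∈ univ \ ({j, k} : Finset (Fin n)), ∑ m ∈ univ \ {j, k},
          ((lam j - lam k) * (lam l - lam m)) ^ 2
        = (lam j - lam k) ^ 2
            * (2 * (ν - 2) * (P2 - lam j ^ 2 - lam k ^ 2) - 2 * (lam j + lam k) ^ 2) := by
    intro j k
    by_cases hjk : j = k
    · subst hjk
      simp
    · have hfac : ∀ l ∈ univ \ ({j, k} : Finset (Fin n)),
          ∑ m ∈ univ \ ({j, k} : Finset (Fin n)), ((lam j - lam k) * (lam l - lam m)) ^ 2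
            = (lam j - lam k) ^ 2 * ∑ m ∈ univ \ ({j, k} : Finset (Fin n)), (lam l - lam m) ^ 2 := by
        intro l _
        rw [Finset.mul_sum]
        exact Finset.sum_congr rfl fun m _ => by ring
      rw [Finset.sum_congr rfl hfac, ← Finset.mul_sum, sum_sub_sq]
      have hsub : ({j, k} : Finset (Fin n)) ⊆ univ := Finset.subset_univ _
      have hcard : ((univ \ ({j, k} : Finset (Fin n))).card : ℝ) = ν - 2 := by
        rw [Finset.card_sdiff_of_subset hsub, Finset.card_pair hjk, Finset.card_univ, Fintype.card_fin]
        have : 2 ≤ n := by omega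
        push_cast [Nat.cast_sub this]
        ring
      have hsum1 : ∑ l ∈ univ \ ({j, k} : Finset (Fin n)), lam l = -(lam j + lam k) := by
        rw [Finset.sum_sdiff_eq_sub hsub, hsum, Finset.sum_pair hjk]
        ring
      have hsum2 : ∑ l ∈ univ \ ({j, k} : Finset (Fin n)), lam l ^ 2
          = P2 - lam j ^ 2 - lam k ^ 2 := by
        rw [Finset.sum_sdiff_eq_sub hsub, Finset.sum_pair hjk, hP2]
        ring
      rw [hcard, hsum1, hsum2]
      ring
  rw [Finset.sum_congr rfl fun j _ => Finset.sum_congr rfl fun k _ => hstep j k]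
  have hexp : ∀ j k : Fin n,
      (lam j - lam k) ^ 2
          * (2 * (ν - 2) * (P2 - lam j ^ 2 - lam k ^ 2) - 2 * (lam j + lam k) ^ 2)
        = (2 * (ν - 2) * P2 * lam j ^ 2 - (2 * ν - 2) * lam j ^ 4)
            + (-(4 * (ν - 2) * P2) * lam j + 4 * (ν - 2) * lam j ^ 3) * lam k
            + (2 * (ν - 2) * P2 - (4 * ν - 12) * lam j ^ 2) * lam k ^ 2
            + (4 * (ν - 2) * lam j) * lam k ^ 3
            + (-(2 * ν - 2)) * lam k ^ 4 := fun j k => by ring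
  rw [Finset.sum_congr rfl fun j _ => Finset.sum_congr rfl fun k _ => hexp j k]
  rw [Finset.sum_congr rfl fun j _ => poly_sum lam _ _ _ _ _]
  rw [Finset.sum_congr rfl fun j (_ : j ∈ univ) => (by rw [hsum]; ring :
      ν * (2 * (ν - 2) * P2 * lam j ^ 2 - (2 * ν - 2) * lam j ^ 4)
        + (-(4 * (ν - 2) * P2) * lam j + 4 * (ν - 2) * lam j ^ 3) * (∑ k, lam k)
        + (2 * (ν - 2) * P2 - (4 * ν - 12) * lam j ^ 2) * P2
        + (4 * (ν - 2) * lam j) * P3 + (-(2 * ν - 2)) * P4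
      = (2 * (ν - 2) * P2 ^ 2 - (2 * ν - 2) * P4)
          + (4 * (ν - 2) * P3) * lam j
          + (2 * ν * (ν - 2) * P2 - (4 * ν - 12) * P2) * lam j ^ 2
          + (0 : ℝ) * lam j ^ 3
          + (-(2 * ν - 2) * ν) * lam j ^ 4)]
  rw [poly_sum lam _ _ _ _ _, hsum]
  ring

theorem p4_add_three_p2_sq_eq_zero_iff (n : ℕ) (hn : 4 ≤ n) (lam : Fin n → ℝ)
    (hsum : ∑ i, lam i = 0) :
    p 4 lam + 3 * p 2 lam ^ 2 = 0 ↔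
      ∃ c : ℝ, n - 1 ≤ (Finset.univ.filter fun i => lam i = c).card := by
  classical
  set ν : ℝ := (n : ℝ) with hν
  have hν4 : (4 : ℝ) ≤ ν := by rw [hν]; exact_mod_cast hn
  set P2 : ℝ := ∑ i, lam i ^ 2 with hP2
  set P4 : ℝ := ∑ i, lam i ^ 4 with hP4
  set T8 : ℝ := ∑ j, ∑ k, ∑ l ∈ univ \ {j, k}, ∑ m ∈ univ \ {j, k},
      ((lam j - lam k) * (lam l - lam m)) ^ 2 with hT8def
  have hkey : T8 = 4 * ((ν ^ 2 - 3 * ν + 3) * P2 ^ 2 - ν * (ν - 1) * P4) := T8_eq hn lam hsum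
  have he2 : esymm 2 lam = -P2 / 2 := by
    have := esymm_two lam hsum; rw [← hP2] at this; linarith
  have he4 : esymm 4 lam = (P2 ^ 2 / 2 - P4) / 4 := by
    have h4 := esymm_four lam hsum
    rw [← hP2, ← hP4, he2] at h4
    linarith
  have h0 : (0:ℝ) < ν := by linarith
  have h1 : (0:ℝ) < ν - 1 := by linarith
  have h2 : (0:ℝ) < ν - 2 := by linarith
  have h3 : (0:ℝ) < ν - 3 := by linarith
  have hp : p 4 lam + 3 * p 2 lam ^ 2
      = (3 / (2 * ν ^ 2 * (ν - 1) ^ 2 * (ν - 2) * (ν - 3))) * T8 := by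
    unfold p
    rw [he2, he4, choose_two_real hn, choose_four_real hn, hkey]
    rw [← hν]
    field_simp [h0.ne', h1.ne', h2.ne', h3.ne']
    ring
  have hcpos : (0:ℝ) < 3 / (2 * ν ^ 2 * (ν - 1) ^ 2 * (ν - 2) * (ν - 3)) := by positivity
  constructor
  · intro hE
    have hT0 : T8 = 0 := by
      rw [hp] at hE
      rcases mul_eq_zero.mp hE with h | h
      · exact absurd h (ne_of_gt hcpos)
      · exact h
    have hv : ∀ j k l m : Fin n, l ≠ j → l ≠ k → m ≠ j → m ≠ k →
        (lam j - lam k) * (lam l - lam m) = 0 := by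
      intro j k l m hlj hlk hmj hmk
      have nonneg2 : ∀ j k : Fin n, (0:ℝ) ≤ ∑ l ∈ univ \ ({j,k} : Finset (Fin n)),
          ∑ m ∈ univ \ ({j,k} : Finset (Fin n)), ((lam j - lam k) * (lam l - lam m)) ^ 2 :=
        fun j k => Finset.sum_nonneg fun _ _ => Finset.sum_nonneg fun _ _ => sq_nonneg _
      have hA : ∀ j : Fin n, ∑ k, ∑ l ∈ univ \ ({j,k} : Finset (Fin n)),
          ∑ m ∈ univ \ ({j,k} : Finset (Fin n)), ((lam j - lam k) * (lam l - lam m)) ^ 2 = 0 :=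
        fun j => (Finset.sum_eq_zero_iff_of_nonneg
          (fun j _ => Finset.sum_nonneg fun k _ => nonneg2 j k)).mp hT0 j (mem_univ j)
      have hB : ∑ l ∈ univ \ ({j,k} : Finset (Fin n)),
          ∑ m ∈ univ \ ({j,k} : Finset (Fin n)), ((lam j - lam k) * (lam l - lam m)) ^ 2 = 0 :=
        (Finset.sum_eq_zero_iff_of_nonneg (fun k _ => nonneg2 j k)).mp (hA j) k (mem_univ k)
      have hlmem : l ∈ univ \ ({j,k} : Finset (Fin n)) := by
        simp [hlj, hlk]
      have hmmem : m ∈ univ \ ({j,k} : Finset (Fin n)) := by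
        simp [hmj, hmk]
      have hC : ∑ m ∈ univ \ ({j,k} : Finset (Fin n)),
          ((lam j - lam k) * (lam l - lam m)) ^ 2 = 0 :=
        (Finset.sum_eq_zero_iff_of_nonneg
          (fun _ _ => Finset.sum_nonneg fun _ _ => sq_nonneg _)).mp hB l hlmem
      have hD : ((lam j - lam k) * (lam l - lam m)) ^ 2 = 0 :=
        (Finset.sum_eq_zero_iff_of_nonneg (fun _ _ => sq_nonneg _)).mp hC m hmmem
      exact pow_eq_zero_iff two_ne_zero |>.mp hD
    -- combinatorial conclusion
    by_cases hall : ∀ i j : Fin n, lam i = lam j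
    · refine ⟨lam ⟨0, by omega⟩, ?_⟩
      have : (Finset.univ.filter fun i => lam i = lam ⟨0, by omega⟩) = univ := by
        apply Finset.filter_true_of_mem
        intro i _
        exact hall i _
      rw [this, Finset.card_univ, Fintype.card_fin]
      omega
    · push_neg at hall
      obtain ⟨a, b, hab⟩ := hall
      have hab' : a ≠ b := fun h => hab (by rw [h])
      have hcard2 : 1 < (univ \ ({a, b} : Finset (Fin n))).card := by
        rw [Finset.card_sdiff_of_subset (Finset.subset_univ _), Finset.card_pair hab',
          Finset.card_univ, Fintype.card_fin]
        omega
      obtain ⟨i0, hi0, i1, hi1, hi01⟩ := Finset.one_lt_card.mp hcard2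
      simp only [Finset.mem_sdiff, Finset.mem_insert, Finset.mem_singleton, not_or] at hi0 hi1
      obtain ⟨-, hi0a, hi0b⟩ := hi0
      obtain ⟨-, hi1a, hi1b⟩ := hi1
      have houts : ∀ i : Fin n, i ≠ a → i ≠ b → lam i = lam i0 := by
        intro i hia hib
        by_cases h : i = i0
        · rw [h]
        · have := hv i i0 a b (Ne.symm hia) (Ne.symm hi0a) (Ne.symm hib) (Ne.symm hi0b)
          rcases mul_eq_zero.mp this with h' | h'
          · exact sub_eq_zero.mp h'
          · exact absurd (sub_eq_zero.mp h') hab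
      set c := lam i0 with hc
      by_cases hca : lam a = c
      · refine ⟨c, ?_⟩
        have hsub : univ \ ({b} : Finset (Fin n)) ⊆ Finset.univ.filter fun i => lam i = c := by
          intro i hi
          simp only [Finset.mem_sdiff, Finset.mem_singleton] at hi
          simp only [Finset.mem_filter, Finset.mem_univ, true_and]
          by_cases h : i = a
          · rw [h]; exact hca
          · exact houts i h hi.2
        have := Finset.card_le_card hsub
        rw [Finset.card_sdiff_of_subset (Finset.subset_univ _), Finset.card_singleton,
          Finset.card_univ, Fintype.card_fin] at this
        omega
      · by_cases hcb : lam b = c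
        · refine ⟨c, ?_⟩
          have hsub : univ \ ({a} : Finset (Fin n)) ⊆ Finset.univ.filter fun i => lam i = c := by
            intro i hi
            simp only [Finset.mem_sdiff, Finset.mem_singleton] at hi
            simp only [Finset.mem_filter, Finset.mem_univ, true_and]
            by_cases h : i = b
            · rw [h]; exact hcb
            · exact houts i hi.2 h
          have := Finset.card_le_card hsub
          rw [Finset.card_sdiff_of_subset (Finset.subset_univ _), Finset.card_singleton,
            Finset.card_univ, Fintype.card_fin] at this
          omega
        · exfalso
          have hi1c : lam i1 = c := houts i1 hi1a hi1b
          have hprod := hv a i0 b i1 (fun h => hab' h.symm) (fun h => hi0b h.symm)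
            hi1a (fun h => hi01 h.symm)
          rcases mul_eq_zero.mp hprod with h' | h'
          · exact hca (sub_eq_zero.mp h')
          · exact hcb (by rw [← hi1c]; exact sub_eq_zero.mp h')
  · rintro ⟨c, hc⟩
    have hT0 : T8 = 0 := by
      apply Finset.sum_eq_zero; intro j _
      apply Finset.sum_eq_zero; intro k _
      apply Finset.sum_eq_zero; intro l hl
      apply Finset.sum_eq_zero; intro m hm
      simp only [Finset.mem_sdiff, Finset.mem_insert, Finset.mem_singleton, not_or] at hl hm
      obtain ⟨-, hlj, hlk⟩ := hl
      obtain ⟨-, hmj, hmk⟩ := hm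
      by_cases hjk : j = k
      · rw [hjk]; simp
      · by_cases hlm : l = m
        · rw [hlm]; simp
        · set S := Finset.univ.filter fun i => lam i = c with hS
          have hcardS : S.card ≤ n := by
            simpa using Finset.card_le_univ S
          have key : lam j = lam k ∨ lam l = lam m := by
            by_contra hcon
            push_neg at hcon
            obtain ⟨hne1, hne2⟩ := hcon
            have hx : j ∉ S ∨ k ∉ S := by
              by_contra h
              push_neg at h
              obtain ⟨h1', h2'⟩ := h
              rw [hS, Finset.mem_filter] at h1' h2'
              exact hne1 (h1'.2.trans h2'.2.symm)
            have hy : l ∉ S ∨ m ∉ S := by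
              by_contra h
              push_neg at h
              obtain ⟨h1', h2'⟩ := h
              rw [hS, Finset.mem_filter] at h1' h2'
              exact hne2 (h1'.2.trans h2'.2.symm)
            obtain ⟨x, hxjk, hxS⟩ : ∃ x, (x = j ∨ x = k) ∧ x ∉ S := by
              rcases hx with h | h
              · exact ⟨j, Or.inl rfl, h⟩
              · exact ⟨k, Or.inr rfl, h⟩
            obtain ⟨y, hylm, hyS⟩ : ∃ y, (y = l ∨ y = m) ∧ y ∉ S := by
              rcases hy with h | h
              · exact ⟨l, Or.inl rfl, h⟩
              · exact ⟨m, Or.inr rfl, h⟩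
            have hxy : x ≠ y := by
              rcases hxjk with rfl | rfl <;> rcases hylm with rfl | rfl
              · exact (Ne.symm hlj)
              · exact (Ne.symm hmj)
              · exact (Ne.symm hlk)
              · exact (Ne.symm hmk)
            have hpair : ({x, y} : Finset (Fin n)) ⊆ univ \ S := by
              intro z hz
              simp only [Finset.mem_insert, Finset.mem_singleton] at hz
              rcases hz with rfl | rfl <;> simp [hxS, hyS]
            have := Finset.card_le_card hpair
            rw [Finset.card_pair hxy, Finset.card_sdiff_of_subset (Finset.subset_univ _),
              Finset.card_univ, Fintype.card_fin] at this
            omega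
          rcases key with h | h
          · rw [sub_eq_zero.mpr h]; ring
          · rw [sub_eq_zero.mpr h]; ring
    rw [hp, hT0, mul_zero]
end

section
/- Let λ₁, …, λₙ be real numbers and let k be a positive integer with k ≤ n − 1. Writing pⱼ = σⱼ(λ)/C(n,j), one has pₖ² ≥ p_{k−1} · p_{k+1}, with equality if and only if either all the λᵢ are equal, or at least n − k + 1 of the λᵢ are equal to zero. -/
open Finset

namespace NewtonAux

lemma esymm_cons (a : ℝ) (s : Multiset ℝ) (j : ℕ) :
    (a ::ₘ s).esymm (j + 1) = s.esymm (j + 1) + a * s.esymm j := by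
  simp only [Multiset.esymm, Multiset.powersetCard_cons, Multiset.map_add, Multiset.sum_add,
    Multiset.map_map, Function.comp_def, Multiset.prod_cons]
  rw [Multiset.sum_map_mul_left]

lemma esymm_zero (s : Multiset ℝ) : s.esymm 0 = 1 := by
  simp [Multiset.esymm]

lemma esymm_eq_zero_of_lt (s : Multiset ℝ) {j : ℕ} (h : Multiset.card s < j) :
    s.esymm j = 0 := by
  simp [Multiset.esymm, Multiset.powersetCard_eq_empty _ h]

lemma esymm_card (s : Multiset ℝ) : s.esymm (Multiset.card s) = s.prod := by
  have h1 : Multiset.card (s.powersetCard (Multiset.card s)) = 1 := by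
    simp [Nat.choose_self]
  obtain ⟨t, ht⟩ := Multiset.card_eq_one.mp h1
  have hs : s ∈ s.powersetCard (Multiset.card s) :=
    Multiset.mem_powersetCard.mpr ⟨le_refl _, rfl⟩
  rw [ht, Multiset.mem_singleton] at hs
  simp [Multiset.esymm, ht, ← hs]

lemma esymm_one (s : Multiset ℝ) : s.esymm 1 = s.sum := by
  simp [Multiset.esymm, Multiset.powersetCard_one, Multiset.map_map, Function.comp_def]

lemma esymm_replicate (t j : ℕ) (c : ℝ) :
    (Multiset.replicate t c).esymm j = (t.choose j) * c ^ j := by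
  induction t generalizing j with
  | zero =>
    cases j with
    | zero => simp [esymm_zero]
    | succ j => rw [esymm_eq_zero_of_lt _ (by simp)]; simp
  | succ t ih =>
    cases j with
    | zero => simp [esymm_zero]
    | succ j =>
      rw [Multiset.replicate_succ, esymm_cons, ih, ih, Nat.choose_succ_succ]
      push_cast
      ring


lemma sum_sq_expand (s : Multiset ℝ) (a : ℝ) :
    (s.map fun x => (x - a) ^ 2).sum
      = (s.map fun x => x ^ 2).sum - 2 * a * s.sum + (Multiset.card s) * a ^ 2 := by
  induction s using Multiset.induction_on with
  | empty => simp
  | cons b t ih =>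
    simp only [Multiset.map_cons, Multiset.sum_cons, Multiset.card_cons]
    rw [ih]
    push_cast
    ring

lemma sum_map_sq_nonneg (s : Multiset ℝ) (f : ℝ → ℝ) :
    0 ≤ (s.map fun x => (f x) ^ 2).sum :=
  Multiset.sum_nonneg (by
    intro x hx
    obtain ⟨y, _, rfl⟩ := Multiset.mem_map.mp hx
    positivity)

lemma sum_map_sq_eq_zero {s : Multiset ℝ} {f : ℝ → ℝ}
    (h : (s.map fun x => (f x) ^ 2).sum = 0) : ∀ x ∈ s, f x = 0 := by
  induction s using Multiset.induction_on with
  | empty => simp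
  | cons b t ih =>
    simp only [Multiset.map_cons, Multiset.sum_cons] at h
    have h1 : 0 ≤ (f b) ^ 2 := sq_nonneg _
    have h2 : 0 ≤ (t.map fun x => (f x) ^ 2).sum := sum_map_sq_nonneg t f
    have hb : (f b) ^ 2 = 0 ∧ (t.map fun x => (f x) ^ 2).sum = 0 :=
      (add_eq_zero_iff_of_nonneg h1 h2).mp h
    intro x hx
    rcases Multiset.mem_cons.mp hx with rfl | hx
    · exact pow_eq_zero_iff (by norm_num) |>.mp hb.1
    · exact ih hb.2 x hx

lemma cs_both (s : Multiset ℝ) :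
    s.sum ^ 2 ≤ (Multiset.card s) * (s.map fun x => x ^ 2).sum ∧
      (s.sum ^ 2 = (Multiset.card s) * (s.map fun x => x ^ 2).sum ↔
        ∀ x ∈ s, ∀ y ∈ s, x = y) := by
  induction s using Multiset.induction_on with
  | empty => simp
  | cons a t ih =>
    have key : (Multiset.card (a ::ₘ t) : ℝ) * ((a ::ₘ t).map fun x => x ^ 2).sum
        - (a ::ₘ t).sum ^ 2
        = ((Multiset.card t : ℝ) * (t.map fun x => x ^ 2).sum - t.sum ^ 2)
          + (t.map fun x => (x - a) ^ 2).sum := by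
      rw [sum_sq_expand t a]
      simp only [Multiset.map_cons, Multiset.sum_cons, Multiset.card_cons]
      push_cast
      ring
    have h1 : 0 ≤ (Multiset.card t : ℝ) * (t.map fun x => x ^ 2).sum - t.sum ^ 2 :=
      sub_nonneg.mpr ih.1
    have h2 : 0 ≤ (t.map fun x => (x - a) ^ 2).sum := sum_map_sq_nonneg t (· - a)
    constructor
    · nlinarith [key]
    · rw [show ((a ::ₘ t).sum ^ 2 = (Multiset.card (a ::ₘ t) : ℝ) * ((a ::ₘ t).map fun x => x ^ 2).sum)
          ↔ ((Multiset.card (a ::ₘ t) : ℝ) * ((a ::ₘ t).map fun x => x ^ 2).sum - (a ::ₘ t).sum ^ 2 = 0)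
          from ⟨fun h => by rw [h]; ring, fun h => by linarith⟩]
      rw [key, add_eq_zero_iff_of_nonneg h1 h2]
      constructor
      · rintro ⟨hd, he⟩
        have hall : ∀ x ∈ t, x = a := fun x hx => sub_eq_zero.mp (sum_map_sq_eq_zero he x hx)
        intro x hx y hy
        have hx' : x = a := by
          rcases Multiset.mem_cons.mp hx with h | h
          · exact h
          · exact hall x h
        have hy' : y = a := by
          rcases Multiset.mem_cons.mp hy with h | h
          · exact h
          · exact hall y h
        rw [hx', hy']
      · intro hall
        have hta : ∀ x ∈ t, x = a := fun x hx =>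
          hall x (Multiset.mem_cons_of_mem hx) a (Multiset.mem_cons_self a t)
        constructor
        · have := ih.2.mpr fun x hx y hy => (hta x hx).trans (hta y hy).symm
          linarith

        · exact Multiset.sum_eq_zero fun y hy => by
            obtain ⟨x, hx, rfl⟩ := Multiset.mem_map.mp hy
            rw [hta x hx]; ring


lemma sq_sum (s : Multiset ℝ) :
    s.sum ^ 2 = (s.map fun x => x ^ 2).sum + 2 * s.esymm 2 := by
  induction s using Multiset.induction_on with
  | empty => simp [esymm_eq_zero_of_lt _ (by simp : Multiset.card (0 : Multiset ℝ) < 2)]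
  | cons a t ih =>
    have h2 : (a ::ₘ t).esymm 2 = t.esymm 2 + a * t.esymm 1 := esymm_cons a t 1
    rw [Multiset.sum_cons, Multiset.map_cons, Multiset.sum_cons, h2, esymm_one]
    nlinarith [ih]

/-- zeros force vanishing of high elementary symmetric functions -/
lemma esymm_eq_zero_of_zeros : ∀ (z : ℕ) (s : Multiset ℝ) (j : ℕ),
    z ≤ s.count 0 → Multiset.card s < j + z → s.esymm j = 0 := by
  intro z
  induction z with
  | zero => intro s j _ h; exact esymm_eq_zero_of_lt s (by simpa using h)
  | succ z ih =>
    intro s j hz hcard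
    have h0 : (0 : ℝ) ∈ s := Multiset.count_pos.mp (by omega)
    obtain ⟨t, rfl⟩ := Multiset.exists_cons_of_mem h0
    cases j with
    | zero =>
      exfalso
      have := Multiset.count_le_card (0 : ℝ) (0 ::ₘ t)
      omega
    | succ j =>
      rw [esymm_cons, zero_mul, add_zero]
      refine ih t (j + 1) ?_ ?_
      · have : (0 ::ₘ t).count 0 = t.count 0 + 1 := by simp
        omega
      · simp only [Multiset.card_cons] at hcard
        omega

/-- conversely, vanishing of all top elementary symmetric functions forces zeros -/
lemma zeros_of_esymm_eq_zero : ∀ (z : ℕ) (s : Multiset ℝ),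
    (∀ j, Multiset.card s < j + z → j ≤ Multiset.card s → s.esymm j = 0) →
    z ≤ Multiset.card s → z ≤ s.count 0 := by
  intro z
  induction z with
  | zero => intro s _ _; exact Nat.zero_le _
  | succ z ih =>
    intro s hvan hz
    have hprod : s.prod = 0 := by
      rw [← esymm_card]
      exact hvan _ (by omega) le_rfl
    have h0 : (0 : ℝ) ∈ s := Multiset.prod_eq_zero_iff.mp hprod
    obtain ⟨t, rfl⟩ := Multiset.exists_cons_of_mem h0
    have hcount : (0 ::ₘ t).count 0 = t.count 0 + 1 := by simp
    have hcard : Multiset.card (0 ::ₘ t) = Multiset.card t + 1 := by simp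
    have ht : z ≤ t.count 0 := by
      refine ih t ?_ (by omega)
      intro j hj1 hj2
      cases j with
      | zero => omega
      | succ j =>
        have := hvan (j + 1) (by omega) (by omega)
        rwa [esymm_cons, zero_mul, add_zero] at this
    omega

/-- reciprocal multiset symmetric function relation -/
lemma esymm_inv_mul_prod : ∀ (s : Multiset ℝ), (∀ x ∈ s, x ≠ 0) →
    ∀ i j : ℕ, i + j = Multiset.card s →
    (s.map fun x => x⁻¹).esymm i * s.prod = s.esymm j := by
  intro s
  induction s using Multiset.induction_on with
  | empty =>
    intro _ i j hij
    simp only [Multiset.card_zero] at hij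
    obtain ⟨rfl, rfl⟩ : i = 0 ∧ j = 0 := by omega
    simp [esymm_zero]
  | cons a t ih =>
    intro hne i j hij
    have ha : a ≠ 0 := hne a (Multiset.mem_cons_self a t)
    have hnet : ∀ x ∈ t, x ≠ 0 := fun x hx => hne x (Multiset.mem_cons_of_mem hx)
    simp only [Multiset.card_cons] at hij
    cases i with
    | zero =>
      have hj : j = Multiset.card (a ::ₘ t) := by simp only [Multiset.card_cons]; omega
      subst hj
      rw [esymm_zero, one_mul, esymm_card]
    | succ i =>
      rw [Multiset.map_cons, esymm_cons, Multiset.prod_cons]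
      cases j with
      | zero =>
        have hi : i = Multiset.card t := by omega
        have e1 : ((t.map fun x => x⁻¹).esymm (i + 1)) = 0 := by
          apply esymm_eq_zero_of_lt
          simp [hi]
        have e2 : (t.map fun x => x⁻¹).esymm i * t.prod = t.esymm 0 :=
          ih hnet i 0 (by omega)
        rw [e1, esymm_zero, zero_add]
        calc a⁻¹ * (t.map fun x => x⁻¹).esymm i * (a * t.prod)
            = (a⁻¹ * a) * ((t.map fun x => x⁻¹).esymm i * t.prod) := by ring
          _ = 1 := by rw [e2, esymm_zero, inv_mul_cancel₀ ha, one_mul]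
      | succ j =>
        have e1 : (t.map fun x => x⁻¹).esymm (i + 1) * t.prod = t.esymm j :=
          ih hnet (i + 1) j (by omega)
        have e2 : (t.map fun x => x⁻¹).esymm i * t.prod = t.esymm (j + 1) :=
          ih hnet i (j + 1) (by omega)
        rw [esymm_cons]
        calc ((t.map fun x => x⁻¹).esymm (i + 1) + a⁻¹ * (t.map fun x => x⁻¹).esymm i) * (a * t.prod)
            = a * ((t.map fun x => x⁻¹).esymm (i + 1) * t.prod)
              + (a⁻¹ * a) * ((t.map fun x => x⁻¹).esymm i * t.prod) := by ring
          _ = t.esymm (j + 1) + a * t.esymm j := by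
              rw [e1, e2, inv_mul_cancel₀ ha]; ring


lemma zero_mem_of_esymm_top (s : Multiset ℝ) (h2 : 2 ≤ Multiset.card s)
    (ha : s.esymm (Multiset.card s - 1) = 0) (hb : s.esymm (Multiset.card s - 2) = 0) :
    (0 : ℝ) ∈ s := by
  by_contra h0
  have hne : ∀ x ∈ s, x ≠ 0 := fun x hx h => h0 (h ▸ hx)
  have hQ : s.prod ≠ 0 := Multiset.prod_ne_zero h0
  have e1 := esymm_inv_mul_prod s hne 1 (Multiset.card s - 1) (by omega)
  have e2 := esymm_inv_mul_prod s hne 2 (Multiset.card s - 2) (by omega)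
  rw [ha] at e1
  rw [hb] at e2
  have hA : (s.map fun x => x⁻¹).esymm 1 = 0 := by
    rcases mul_eq_zero.mp e1 with h | h
    · exact h
    · exact absurd h hQ
  have hB : (s.map fun x => x⁻¹).esymm 2 = 0 := by
    rcases mul_eq_zero.mp e2 with h | h
    · exact h
    · exact absurd h hQ
  have hs := sq_sum (s.map fun x => x⁻¹)
  rw [← esymm_one, hA, hB] at hs
  have hsum0 : ((s.map fun x => x⁻¹).map fun x => x ^ 2).sum = 0 := by linarith
  have hall := sum_map_sq_eq_zero (s := s.map fun x => x⁻¹) (f := fun x => x) hsum0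
  have hnonempty : s ≠ 0 := by
    intro h
    rw [h] at h2
    simp at h2
  obtain ⟨x, hx⟩ := Multiset.exists_mem_of_ne_zero hnonempty
  have : x⁻¹ = 0 := hall x⁻¹ (Multiset.mem_map_of_mem _ hx)
  exact hne x hx (inv_eq_zero.mp this)

open Polynomial

lemma cast_sub_add (n j : ℕ) (h : j + 1 ≤ n) : ((n - 1 - j : ℕ) : ℝ) + 1 = ((n - j : ℕ) : ℝ) := by
  have h' : (n - 1 - j) + 1 = n - j := by omega
  exact_mod_cast congrArg (Nat.cast : ℕ → ℝ) h'

lemma deriv_step (s : Multiset ℝ) (h2 : 2 ≤ Multiset.card s) :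
    ∃ s' : Multiset ℝ, Multiset.card s' = Multiset.card s - 1 ∧
      ∀ j ≤ Multiset.card s - 1,
        ((Multiset.card s - j : ℕ) : ℝ) * s.esymm j
          = (Multiset.card s : ℝ) * s'.esymm j := by
  have hmonic : ((s.map fun a => X - C a).prod).Monic :=
    monic_multiset_prod_of_monic s (fun a => X - C a) fun a _ => monic_X_sub_C a
  set n := Multiset.card s with hn
  set P : ℝ[X] := (s.map fun a => X - C a).prod with hP
  have hdegP : P.natDegree = n := by
    rw [hP, natDegree_multiset_prod_of_monic]
    · rw [Multiset.map_map]
      simp [Function.comp_def, natDegree_X_sub_C, hn]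
    · intro f hf
      obtain ⟨a, _, rfl⟩ := Multiset.mem_map.mp hf
      exact monic_X_sub_C a
  have hroots : P.roots = s := roots_multiset_prod_X_sub_C s
  have hcn : P.coeff n = 1 := by
    have := hmonic.coeff_natDegree
    rwa [hdegP] at this
  have hnne : ((n : ℕ) : ℝ) ≠ 0 := by
    have : (0 : ℕ) < n := by omega
    exact_mod_cast this.ne'
  have hcd : (derivative P).coeff (n - 1) = (n : ℝ) := by
    have h := coeff_derivative P (n - 1)
    rw [show n - 1 + 1 = n from by omega] at h
    rw [h, hcn, one_mul,
      show ((n - 1 : ℕ) : ℝ) + 1 = ((n : ℕ) : ℝ) from by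
        exact_mod_cast congrArg (Nat.cast : ℕ → ℝ) (show n - 1 + 1 = n by omega)]
  have hDne : derivative P ≠ 0 := fun h => by
    rw [h, coeff_zero] at hcd
    exact hnne hcd.symm
  have hdegD : (derivative P).natDegree = n - 1 := by
    have hlt : (derivative P).natDegree < n := by
      have := natDegree_derivative_lt (p := P) (by omega)
      omega
    have hge : n - 1 ≤ (derivative P).natDegree :=
      le_natDegree_of_ne_zero (by rw [hcd]; exact hnne)
    omega
  have hlcD : (derivative P).leadingCoeff = (n : ℝ) := by
    rw [leadingCoeff, hdegD, hcd]
  have hcardD : Multiset.card (derivative P).roots = n - 1 := by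
    have hle : Multiset.card (derivative P).roots ≤ n - 1 := by
      have := card_roots' (derivative P)
      omega
    have hge := card_roots_le_derivative P
    rw [hroots] at hge
    omega
  refine ⟨(derivative P).roots, hcardD, ?_⟩
  intro j hj
  have hcoeff1 : P.coeff (n - j) = (-1 : ℝ) ^ j * s.esymm j := by
    have h := Multiset.prod_X_sub_C_coeff s (show n - j ≤ Multiset.card s by omega)
    rw [← hn, show n - (n - j) = j from by omega] at h
    exact h
  have hderivc : (derivative P).coeff (n - 1 - j)
      = (-1 : ℝ) ^ j * s.esymm j * ((n - j : ℕ) : ℝ) := by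
    have h := coeff_derivative P (n - 1 - j)
    rw [show n - 1 - j + 1 = n - j from by omega, hcoeff1, cast_sub_add n j (by omega)] at h
    exact h
  have hcoeff2 : (derivative P).coeff (n - 1 - j)
      = (n : ℝ) * ((-1 : ℝ) ^ j * (derivative P).roots.esymm j) := by
    have h := Polynomial.coeff_eq_esymm_roots_of_card
      (by rw [hcardD, hdegD] : Multiset.card (derivative P).roots = (derivative P).natDegree)
      (show n - 1 - j ≤ (derivative P).natDegree by rw [hdegD]; omega)
    rw [hdegD, hlcD, show n - 1 - (n - 1 - j) = j from by omega] at h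
    rw [h]; ring
  have hcomb := hderivc.symm.trans hcoeff2
  have hfin : (-1 : ℝ) ^ j * (((n - j : ℕ) : ℝ) * s.esymm j)
      = (-1 : ℝ) ^ j * ((n : ℝ) * (derivative P).roots.esymm j) := by
    calc (-1 : ℝ) ^ j * (((n - j : ℕ) : ℝ) * s.esymm j)
        = (-1 : ℝ) ^ j * s.esymm j * ((n - j : ℕ) : ℝ) := by ring
      _ = (n : ℝ) * ((-1 : ℝ) ^ j * (derivative P).roots.esymm j) := hcomb
      _ = (-1 : ℝ) ^ j * ((n : ℝ) * (derivative P).roots.esymm j) := by ring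
  exact mul_left_cancel₀ (pow_ne_zero j (by norm_num) : ((-1 : ℝ) ^ j) ≠ 0) hfin


lemma base_case (k : ℕ) (hk : 1 ≤ k) (s : Multiset ℝ) (hcard : Multiset.card s = k + 1) :
    (s.esymm (k - 1) / ((k + 1).choose (k - 1) : ℝ)) *
        (s.esymm (k + 1) / ((k + 1).choose (k + 1) : ℝ))
        ≤ (s.esymm k / ((k + 1).choose k : ℝ)) ^ 2 ∧
      ((s.esymm k / ((k + 1).choose k : ℝ)) ^ 2 =
          (s.esymm (k - 1) / ((k + 1).choose (k - 1) : ℝ)) *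
            (s.esymm (k + 1) / ((k + 1).choose (k + 1) : ℝ)) →
        (∃ c : ℝ, ∀ x ∈ s, x = c) ∨ (k + 1) - k + 1 ≤ s.count 0) := by
  -- choose values
  have hCk : ((k + 1).choose k : ℝ) = (k + 1 : ℝ) := by
    rw [Nat.choose_succ_self_right]
    push_cast
    ring
  have hCtop : ((k + 1).choose (k + 1) : ℝ) = 1 := by
    rw [Nat.choose_self]
    norm_num
  have hCm : 2 * ((k + 1).choose (k - 1) : ℝ) = (k + 1 : ℝ) * (k : ℝ) := by
    have h1 : (k + 1).choose (k - 1) = (k + 1).choose 2 := by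
      have := Nat.choose_symm (show 2 ≤ k + 1 by omega)
      rw [show k + 1 - 2 = k - 1 from by omega] at this
      exact this
    have h2 : (k + 1) * k.choose 1 = (k + 1).choose 2 * 2 := Nat.add_one_mul_choose_eq k 1
    rw [Nat.choose_one_right] at h2
    rw [h1]
    have := congrArg (Nat.cast : ℕ → ℝ) h2
    push_cast at this
    linarith
  have hCmpos : (0 : ℝ) < ((k + 1).choose (k - 1) : ℝ) := by
    exact_mod_cast Nat.choose_pos (show k - 1 ≤ k + 1 by omega)
  have hkpos : (0 : ℝ) < (k : ℝ) := by exact_mod_cast hk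
  have hEtop : s.esymm (k + 1) = s.prod := by rw [← hcard, esymm_card]
  by_cases h0 : (0 : ℝ) ∈ s
  · -- a zero is present
    have hprod : s.prod = 0 := Multiset.prod_eq_zero h0
    rw [hEtop, hprod]
    constructor
    · rw [zero_div, mul_zero]
      positivity
    · intro heq
      rw [zero_div, mul_zero, hCk] at heq
      have hEk : s.esymm k = 0 := by
        have h1 : (k + 1 : ℝ) ≠ 0 := by positivity
        have := pow_eq_zero_iff (n := 2) (by norm_num) |>.mp heq
        field_simp at this
        rw [mul_zero] at this
        exact this
      obtain ⟨t, rfl⟩ := Multiset.exists_cons_of_mem h0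
      have hct : Multiset.card t = k := by
        simp only [Multiset.card_cons] at hcard
        omega
      obtain ⟨k1, rfl⟩ : ∃ k1, k = k1 + 1 := ⟨k - 1, by omega⟩
      rw [esymm_cons, zero_mul, add_zero, ← hct, esymm_card] at hEk
      have h0t : (0 : ℝ) ∈ t := Multiset.prod_eq_zero_iff.mp hEk
      right
      have : 1 ≤ t.count (0 : ℝ) := Multiset.one_le_count_iff_mem.mpr h0t
      rw [Multiset.count_cons_self]
      omega
  · -- all entries nonzero
    have hne : ∀ x ∈ s, x ≠ 0 := fun x hx h => h0 (h ▸ hx)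
    have hQ : s.prod ≠ 0 := Multiset.prod_ne_zero h0
    set y : Multiset ℝ := s.map fun x => x⁻¹ with hy
    have hcy : Multiset.card y = k + 1 := by rw [hy, Multiset.card_map, hcard]
    have E1 : y.esymm 1 * s.prod = s.esymm k :=
      esymm_inv_mul_prod s hne 1 k (by omega)
    have E2 : y.esymm 2 * s.prod = s.esymm (k - 1) :=
      esymm_inv_mul_prod s hne 2 (k - 1) (by omega)
    have hD := cs_both y
    have hsq := sq_sum y
    rw [hcy] at hD
    -- key identity
    set A := y.esymm 1 with hA
    set B := y.esymm 2 with hB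
    set Q := s.prod with hQdef
    have hsum : y.sum = A := (esymm_one y).symm
    rw [hsum] at hD hsq
    set S2 := (y.map fun x => x ^ 2).sum with hS2
    have hS2v : S2 = A ^ 2 - 2 * B := by linarith [hsq]
    have e2' : s.esymm (k - 1) / ((k + 1).choose (k - 1) : ℝ)
        = 2 * (B * Q) / (((k : ℝ) + 1) * (k : ℝ)) := by
      rw [← E2, div_eq_div_iff hCmpos.ne' (by positivity)]
      linear_combination (-(B * Q)) * hCm
    have key : (s.esymm k / ((k + 1).choose k : ℝ)) ^ 2 -
        (s.esymm (k - 1) / ((k + 1).choose (k - 1) : ℝ)) *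
          (s.esymm (k + 1) / ((k + 1).choose (k + 1) : ℝ))
        = Q ^ 2 * (((k : ℝ) + 1) * S2 - A ^ 2) / (((k : ℝ) + 1) ^ 2 * k) := by
      rw [hEtop, ← E1, hCk, hCtop, div_one, e2', hS2v]
      field_simp
      ring
    have hDnn : 0 ≤ ((k : ℝ) + 1) * S2 - A ^ 2 := by
      have := hD.1
      push_cast at this ⊢
      linarith
    constructor
    · have hrhs : 0 ≤ Q ^ 2 * (((k : ℝ) + 1) * S2 - A ^ 2) / (((k : ℝ) + 1) ^ 2 * k) :=
        div_nonneg (mul_nonneg (sq_nonneg Q) hDnn) (by positivity)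
      linarith [key]
    · intro heq
      left
      have hzero : Q ^ 2 * (((k : ℝ) + 1) * S2 - A ^ 2) = 0 := by
        have hden : (((k : ℝ) + 1) ^ 2 * k) ≠ 0 := by positivity
        have : Q ^ 2 * (((k : ℝ) + 1) * S2 - A ^ 2) / (((k : ℝ) + 1) ^ 2 * k) = 0 := by
          rw [← key]
          linarith [heq]
        field_simp at this
        rw [mul_zero] at this
        exact this
      have hQQ : Q ^ 2 ≠ 0 := pow_ne_zero 2 hQ
      have hD0 : A ^ 2 = ((k : ℝ) + 1) * S2 := by
        rcases mul_eq_zero.mp hzero with h | h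
        · exact absurd h hQQ
        · linarith
      have hally : ∀ x ∈ y, ∀ z ∈ y, x = z := by
        apply hD.2.mp
        push_cast
        linarith
      have hs0 : s ≠ 0 := by
        intro h
        rw [h] at hcard
        simp at hcard
      obtain ⟨c, hc⟩ := Multiset.exists_mem_of_ne_zero hs0
      refine ⟨c, fun x hx => ?_⟩
      have := hally x⁻¹ (Multiset.mem_map_of_mem _ hx) c⁻¹ (Multiset.mem_map_of_mem _ hc)
      exact inv_injective this

lemma main_induction (k : ℕ) (hk : 1 ≤ k) :
    ∀ n, k + 1 ≤ n → ∀ s : Multiset ℝ, Multiset.card s = n →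
    (s.esymm (k - 1) / (n.choose (k - 1) : ℝ)) * (s.esymm (k + 1) / (n.choose (k + 1) : ℝ))
        ≤ (s.esymm k / (n.choose k : ℝ)) ^ 2 ∧
      ((s.esymm k / (n.choose k : ℝ)) ^ 2 =
          (s.esymm (k - 1) / (n.choose (k - 1) : ℝ)) *
            (s.esymm (k + 1) / (n.choose (k + 1) : ℝ)) →
        (∃ c : ℝ, ∀ x ∈ s, x = c) ∨ n - k + 1 ≤ s.count 0) := by
  intro n hn
  induction n, hn using Nat.le_induction with
  | base => exact fun s hs => base_case k hk s hs
  | succ n hn ih =>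
    intro s hcard
    obtain ⟨s', hcard', htrans⟩ := deriv_step s (by omega)
    rw [hcard] at hcard' htrans
    simp only [Nat.add_sub_cancel] at hcard' htrans
    -- normalized symmetric functions agree
    have hp : ∀ j, j ≤ n → s.esymm j / ((n + 1).choose j : ℝ) = s'.esymm j / (n.choose j : ℝ) := by
      intro j hj
      have hC := congrArg (Nat.cast : ℕ → ℝ) (Nat.choose_mul_succ_eq n j)
      push_cast at hC
      have hC1 : (0 : ℝ) < ((n + 1).choose j : ℝ) := by
        exact_mod_cast Nat.choose_pos (by omega : j ≤ n + 1)
      have hC2 : (0 : ℝ) < (n.choose j : ℝ) := by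
        exact_mod_cast Nat.choose_pos hj
      have hT := htrans j hj
      rw [div_eq_div_iff hC1.ne' hC2.ne']
      have hn1 : (0 : ℝ) < (n : ℝ) + 1 := by positivity
      apply mul_left_cancel₀ hn1.ne'
      calc ((n : ℝ) + 1) * (s.esymm j * (n.choose j : ℝ))
          = (n.choose j : ℝ) * ((n + 1 : ℕ) : ℝ) * s.esymm j := by push_cast; ring
        _ = ((n + 1).choose j : ℝ) * ((n + 1 - j : ℕ) : ℝ) * s.esymm j := by
            rw [show ((n.choose j : ℕ) : ℝ) * ((n + 1 : ℕ) : ℝ)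

              = (((n + 1).choose j : ℕ) : ℝ) * ((n + 1 - j : ℕ) : ℝ) from by exact_mod_cast hC]
        _ = ((n + 1).choose j : ℝ) * (((n + 1 - j : ℕ) : ℝ) * s.esymm j) := by ring
        _ = ((n + 1).choose j : ℝ) * (((n + 1 : ℕ) : ℝ) * s'.esymm j) := by rw [hT]
        _ = ((n : ℝ) + 1) * (s'.esymm j * ((n + 1).choose j : ℝ)) := by push_cast; ring
    have hpk : s.esymm k / ((n + 1).choose k : ℝ) = s'.esymm k / (n.choose k : ℝ) :=
      hp k (by omega)
    have hpk1 : s.esymm (k - 1) / ((n + 1).choose (k - 1) : ℝ)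
        = s'.esymm (k - 1) / (n.choose (k - 1) : ℝ) := hp (k - 1) (by omega)
    have hpk2 : s.esymm (k + 1) / ((n + 1).choose (k + 1) : ℝ)
        = s'.esymm (k + 1) / (n.choose (k + 1) : ℝ) := hp (k + 1) (by omega)
    obtain ⟨ih1, ih2⟩ := ih s' hcard'
    rw [hpk, hpk1, hpk2]
    refine ⟨ih1, fun heq => ?_⟩
    rcases ih2 heq with ⟨c, hc⟩ | hz
    · -- all elements of s' equal c ⇒ all elements of s equal c
      left
      have hrep : s' = Multiset.replicate n c := Multiset.eq_replicate.mpr ⟨hcard', hc⟩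
      have hE : ∀ j, s'.esymm j = (n.choose j : ℝ) * c ^ j := by
        intro j; rw [hrep, esymm_replicate]
      have hnne : (n : ℝ) ≠ 0 := by
        have : (0 : ℕ) < n := by omega
        exact_mod_cast this.ne'
      have h1 : s.esymm 1 = ((n : ℝ) + 1) * c := by
        have hT := htrans 1 (by omega)
        rw [hE 1, Nat.choose_one_right, pow_one, show n + 1 - 1 = n from by omega] at hT
        have h' : (n : ℝ) * s.esymm 1 = (n : ℝ) * (((n : ℝ) + 1) * c) := by
          rw [hT]; push_cast; ring
        exact mul_left_cancel₀ hnne h'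
      have h2 : 2 * s.esymm 2 = ((n : ℝ) + 1) * (n : ℝ) * c ^ 2 := by
        have hT := htrans 2 (by omega)
        rw [hE 2, show n + 1 - 2 = n - 1 from by omega] at hT
        have hC2 : 2 * ((n.choose 2 : ℕ) : ℝ) = (n : ℝ) * ((n : ℝ) - 1) := by
          have h := Nat.add_one_mul_choose_eq (n - 1) 1
          simp only [Nat.succ_eq_add_one, Nat.choose_one_right] at h
          rw [show n - 1 + 1 = n from by omega] at h
          have hc := congrArg (Nat.cast : ℕ → ℝ) h
          push_cast [Nat.cast_sub (show 1 ≤ n by omega)] at hc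
          linarith
        have hn1ne : ((n : ℝ) - 1) ≠ 0 := by
          have : (1 : ℝ) < (n : ℝ) := by exact_mod_cast (show 1 < n by omega)
          linarith
        have hcast : ((n - 1 : ℕ) : ℝ) = (n : ℝ) - 1 := by
          push_cast [Nat.cast_sub (show 1 ≤ n by omega)]
          ring
        rw [hcast] at hT
        apply mul_left_cancel₀ hn1ne
        calc ((n : ℝ) - 1) * (2 * s.esymm 2) = 2 * (((n : ℝ) - 1) * s.esymm 2) := by ring
          _ = 2 * (((n + 1 : ℕ) : ℝ) * ((n.choose 2 : ℝ) * c ^ 2)) := by rw [hT]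
          _ = ((n : ℝ) + 1) * (2 * (n.choose 2 : ℝ)) * c ^ 2 := by push_cast; ring
          _ = ((n : ℝ) + 1) * ((n : ℝ) * ((n : ℝ) - 1)) * c ^ 2 := by rw [hC2]
          _ = ((n : ℝ) - 1) * (((n : ℝ) + 1) * (n : ℝ) * c ^ 2) := by ring
      have hsumv : s.sum = ((n : ℝ) + 1) * c := by rw [← esymm_one]; exact h1
      have hS2v : (s.map fun x => x ^ 2).sum = ((n : ℝ) + 1) * c ^ 2 := by
        have hq := sq_sum s
        rw [hsumv] at hq
        nlinarith [hq, h2]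
      have hzero : (s.map fun x => (x - c) ^ 2).sum = 0 := by
        rw [sum_sq_expand s c, hS2v, hsumv, hcard]
        push_cast
        ring
      exact ⟨c, fun x hx => by
        have h' : x - c = 0 := sum_map_sq_eq_zero (s := s) (f := fun x => x - c) hzero x hx
        linarith⟩
    · -- many zeros in s'
      right
      have hvan : ∀ j, k ≤ j → j ≤ n → s.esymm j = 0 := by
        intro j hkj hjn
        have hz' : s'.esymm j = 0 :=
          esymm_eq_zero_of_zeros (n - k + 1) s' j hz (by omega)
        have hT := htrans j hjn
        rw [hz', mul_zero] at hT
        have hne : ((n + 1 - j : ℕ) : ℝ) ≠ 0 := by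
          have : (0 : ℕ) < n + 1 - j := by omega
          exact_mod_cast this.ne'
        exact (mul_eq_zero.mp hT).resolve_left hne
      have h0s : (0 : ℝ) ∈ s := by
        apply zero_mem_of_esymm_top s (by omega)
        · rw [hcard]
          exact hvan n (by omega) (by omega)
        · rw [hcard]
          exact hvan (n - 1) (by omega) (by omega)
      have hcount := zeros_of_esymm_eq_zero (n - k + 2) s ?_ (by omega)
      · omega
      · intro j hj1 hj2
        rw [hcard] at hj1 hj2
        by_cases hj : j ≤ n
        · exact hvan j (by omega) hj
        · have : j = n + 1 := by omega
          rw [this, ← hcard, esymm_card]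
          exact Multiset.prod_eq_zero h0s

end NewtonAux

open NewtonAux in
theorem newton_inequality_sharp (n k : ℕ) (hk1 : 1 ≤ k) (hk : k ≤ n - 1)
    (lam : Fin n → ℝ) :
    p (k - 1) lam * p (k + 1) lam ≤ p k lam ^ 2 ∧
      (p k lam ^ 2 = p (k - 1) lam * p (k + 1) lam ↔
        (∀ i j, lam i = lam j) ∨
          n - k + 1 ≤ (Finset.univ.filter fun i => lam i = 0).card) := by
  classical
  have hkn : k + 1 ≤ n := by omega
  set m : Multiset ℝ := (Finset.univ.val : Multiset (Fin n)).map lam with hm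
  have hcard : Multiset.card m = n := by
    rw [hm, Multiset.card_map]
    simp
  have hesymm : ∀ j, esymm j lam = m.esymm j := by
    intro j
    rw [esymm, hm]
    exact (Finset.esymm_map_val lam Finset.univ j).symm
  have hp : ∀ j, p j lam = m.esymm j / (n.choose j : ℝ) := by
    intro j
    rw [p, hesymm]
  have hcnt : Multiset.count (0 : ℝ) m = (Finset.univ.filter fun i => lam i = 0).card := by
    rw [hm, Multiset.count_map, Finset.card_def, Finset.filter_val]
    congr 1
    apply Multiset.filter_congr
    intro x _
    exact eq_comm
  have hmem : ∀ i : Fin n, lam i ∈ m := fun i => by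
    rw [hm]
    exact Multiset.mem_map_of_mem lam (Finset.mem_univ_val i)
  obtain ⟨ineq, eqimp⟩ := main_induction k hk1 n hkn m hcard
  rw [hp (k - 1), hp k, hp (k + 1)]
  refine ⟨ineq, ?_, ?_⟩
  · -- forward: equality implies rigidity
    intro heq
    rcases eqimp heq with ⟨c, hc⟩ | hz
    · left
      intro i j
      rw [hc (lam i) (hmem i), hc (lam j) (hmem j)]
    · right
      rw [← hcnt]
      exact hz
  · -- backward: rigidity implies equality
    intro h
    rcases h with hall | hz
    · have hn0 : 0 < n := by omega
      set c : ℝ := lam ⟨0, hn0⟩ with hc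
      have hrep : m = Multiset.replicate n c := by
        rw [Multiset.eq_replicate]
        refine ⟨hcard, fun b hb => ?_⟩
        rw [hm] at hb
        obtain ⟨i, _, rfl⟩ := Multiset.mem_map.mp hb
        exact hall i ⟨0, hn0⟩
      have hpj : ∀ j, j ≤ n → m.esymm j / (n.choose j : ℝ) = c ^ j := by
        intro j hj
        have hpos : (0 : ℝ) < (n.choose j : ℝ) := by exact_mod_cast Nat.choose_pos hj
        rw [hrep, esymm_replicate]
        exact mul_div_cancel_left₀ _ hpos.ne'
      rw [hpj (k - 1) (by omega), hpj k (by omega), hpj (k + 1) (by omega)]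
      rw [← pow_mul, ← pow_add]
      congr 1
      omega
    · have hzc : n - k + 1 ≤ Multiset.count (0 : ℝ) m := by rw [hcnt]; exact hz
      have h1 : m.esymm k = 0 :=
        esymm_eq_zero_of_zeros (n - k + 1) m k hzc (by omega)
      have h2 : m.esymm (k + 1) = 0 :=
        esymm_eq_zero_of_zeros (n - k + 1) m (k + 1) hzc (by omega)
      rw [h1, h2]
      simp
end

section
/- Let n ≥ 4 and let λ₁, …, λₙ be real numbers with λ₁ + ⋯ + λₙ = 0. Writing pₖ = σₖ(λ)/C(n,k), one has (3p₃² − 4p₂p₄)(p₃² + 4p₂³) ≤ 0. -/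
open Finset

namespace ProductIneqAux

open Polynomial Multiset

lemma deriv_multiset_step (m : ℕ) (s : Multiset ℝ) (hcard : Multiset.card s = m + 1) :
    ∃ t : Multiset ℝ, Multiset.card t = m ∧
      ∀ j : ℕ, j ≤ m → ((m : ℝ) + 1 - j) * s.esymm j = ((m : ℝ) + 1) * t.esymm j := by
  set P : ℝ[X] := (s.map fun r => X - C r).prod with hP
  have hmonic : P.Monic :=
    monic_multiset_prod_of_monic _ _ (fun r _ => monic_X_sub_C r)
  have hdeg : P.natDegree = m + 1 := by
    rw [hP, natDegree_multiset_prod_X_sub_C_eq_card, hcard]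
  have hroots : P.roots = s := roots_multiset_prod_X_sub_C s
  set Q : ℝ[X] := derivative P with hQ
  have hQdeg : Q.natDegree = m := by
    have := degree_derivative_eq P (by rw [hdeg]; omega)
    rw [hdeg] at this
    rw [hQ]
    exact natDegree_eq_of_degree_eq_some (by exact_mod_cast this)
  have hQcard : Multiset.card Q.roots = m := by
    have h1 : Multiset.card Q.roots ≤ m := hQdeg ▸ Q.card_roots'
    have h2 : Multiset.card P.roots ≤ Multiset.card Q.roots + 1 := P.card_roots_le_derivative
    rw [hroots, hcard] at h2
    omega
  refine ⟨Q.roots, hQcard, fun j hj => ?_⟩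
  have hlead : Q.leadingCoeff = (m : ℝ) + 1 := by
    rw [leadingCoeff, hQdeg, hQ, coeff_derivative, ← hdeg, hmonic.coeff_natDegree]
    ring
  have hQcoeff : Q.coeff (m - j) = Q.leadingCoeff * (-1) ^ j * Q.roots.esymm j := by
    have := Polynomial.coeff_eq_esymm_roots_of_card (p := Q) (by rw [hQcard, hQdeg])
      (k := m - j) (by omega)
    rw [this]
    congr 2 <;> · rw [hQdeg]; congr 1; omega
  have hPcoeff : P.coeff (m - j + 1) = (-1) ^ j * s.esymm j := by
    have := Polynomial.coeff_eq_esymm_roots_of_card (p := P) (by rw [hroots, hcard, hdeg])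
      (k := m - j + 1) (by omega)
    rw [this, hmonic.leadingCoeff, one_mul, hroots]
    congr 2 <;> · rw [hdeg]; omega
  have hder : Q.coeff (m - j) = P.coeff (m - j + 1) * ((m : ℝ) - j + 1) := by
    rw [hQ, coeff_derivative]
    congr 1
    push_cast [Nat.cast_sub hj]
    ring
  rw [hQcoeff, hPcoeff, hlead] at hder
  have hne : ((-1 : ℝ)) ^ j ≠ 0 := by positivity
  have hcan : ((-1:ℝ))^j * (((m:ℝ)+1) * Q.roots.esymm j)
      = (-1:ℝ)^j * (((m:ℝ)+1-j) * s.esymm j) := by linear_combination hder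
  have := mul_left_cancel₀ hne hcan
  linarith

lemma reduce_to_four (m : ℕ) (hm : 4 ≤ m) : ∀ s : Multiset ℝ, Multiset.card s = m →
    ∃ t : Multiset ℝ, Multiset.card t = 4 ∧
      ∀ j : ℕ, j ≤ 4 → s.esymm j / (m.choose j : ℝ) = t.esymm j / ((Nat.choose 4 j : ℕ) : ℝ) := by
  induction m, hm using Nat.le_induction with
  | base => exact fun s hs => ⟨s, hs, fun j _ => rfl⟩
  | succ m hm ih =>
    intro s hs
    obtain ⟨t, ht, hrel⟩ := deriv_multiset_step m s hs
    obtain ⟨u, hu, hrel2⟩ := ih t ht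
    refine ⟨u, hu, fun j hj => ?_⟩
    rw [← hrel2 j hj]
    have hjm : j ≤ m := by omega
    have h1 : (0:ℝ) < ((m+1).choose j : ℝ) := by
      exact_mod_cast Nat.choose_pos (by omega)
    have h2 : (0:ℝ) < (m.choose j : ℝ) := by
      exact_mod_cast Nat.choose_pos hjm
    rw [div_eq_div_iff h1.ne' h2.ne']
    have hc : ((m.choose j : ℝ)) * ((m:ℝ)+1) = (((m+1).choose j : ℝ)) * ((m:ℝ)+1-j) := by
      have := Nat.choose_mul_succ_eq m j
      have hcast : ((m.choose j * (m+1) : ℕ) : ℝ) = (((m+1).choose j * (m+1-j) : ℕ) : ℝ) := by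
        exact_mod_cast congrArg (Nat.cast (R := ℝ)) this
      push_cast [Nat.cast_sub (by omega : j ≤ m + 1)] at hcast
      linarith
    have hmul : ((m:ℝ)+1) * (s.esymm j * (m.choose j : ℝ))
        = ((m:ℝ)+1) * (t.esymm j * (((m+1).choose j : ℕ) : ℝ)) := by
      linear_combination s.esymm j * hc + (((m+1).choose j : ℝ)) * hrel j hjm
    have hne : ((m:ℝ)+1) ≠ 0 := by positivity
    have := mul_left_cancel₀ hne hmul
    push_cast at this ⊢
    linarith

lemma exists_four (s : Multiset ℝ) (h : Multiset.card s = 4) :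
    ∃ w x y z : ℝ, s = {w, x, y, z} := by
  have hnew : s ≠ 0 := by rintro h0; rw [h0] at h; simp at h
  obtain ⟨w, hw⟩ := Multiset.exists_mem_of_ne_zero hnew
  obtain ⟨s1, rfl⟩ := Multiset.exists_cons_of_mem hw
  rw [Multiset.card_cons] at h
  have hnex : s1 ≠ 0 := by rintro h0; rw [h0] at h; simp at h
  obtain ⟨x, hx⟩ := Multiset.exists_mem_of_ne_zero hnex
  obtain ⟨s2, rfl⟩ := Multiset.exists_cons_of_mem hx
  rw [Multiset.card_cons] at h
  have hney : s2 ≠ 0 := by rintro h0; rw [h0] at h; simp at h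
  obtain ⟨y, hy⟩ := Multiset.exists_mem_of_ne_zero hney
  obtain ⟨s3, rfl⟩ := Multiset.exists_cons_of_mem hy
  rw [Multiset.card_cons] at h
  have hnez : s3 ≠ 0 := by rintro h0; rw [h0] at h; simp at h
  obtain ⟨z, hz⟩ := Multiset.exists_mem_of_ne_zero hnez
  obtain ⟨s4, rfl⟩ := Multiset.exists_cons_of_mem hz
  rw [Multiset.card_cons] at h
  have hs4 : s4 = 0 := by rw [← Multiset.card_eq_zero]; omega
  exact ⟨w, x, y, z, by rw [hs4]; rfl⟩

/-- Newton's inequality for four arbitrary reals: `8 e₂ e₄ ≤ 3 e₃²`. -/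
lemma newton4 (w x y z : ℝ) :
    8 * ((w*x+w*y+w*z+x*y+x*z+y*z) * (w*x*y*z)) ≤ 3 * (w*x*y+w*x*z+w*y*z+x*y*z)^2 := by
  nlinarith [sq_nonneg (w*x*(y-z)), sq_nonneg (w*y*(x-z)), sq_nonneg (w*z*(x-y)),
    sq_nonneg (x*y*(w-z)), sq_nonneg (x*z*(w-y)), sq_nonneg (y*z*(w-x)),
    sq_nonneg (x*y*z - w*y*z), sq_nonneg (x*y*z - w*x*z), sq_nonneg (x*y*z - w*x*y),
    sq_nonneg (w*y*z - w*x*z), sq_nonneg (w*y*z - w*x*y), sq_nonneg (w*x*z - w*x*y)]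

/-- Abstract core: if the "shifted Newton inequality" holds for all `t` and `a < 0`,
then the target product is nonpositive. -/
lemma core (a b c : ℝ) (ha : a < 0)
    (hnewton : ∀ t : ℝ, (a + t^2) * (c + 4*t*b + 6*t^2*a + t^4) ≤ (b + 3*t*a + t^3)^2) :
    (3*b^2 - 4*a*c) * (b^2 + 4*a^3) ≤ 0 := by
  have h := hnewton (-b/(2*a))
  have hane : a ≠ 0 := ha.ne
  have key : (3*b^2 - 4*a*c) * (b^2 + 4*a^3)
      = 16*a^3 * ((b + 3*(-b/(2*a))*a + (-b/(2*a))^3)^2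
        - (a + (-b/(2*a))^2) * (c + 4*(-b/(2*a))*b + 6*(-b/(2*a))^2*a + (-b/(2*a))^4)) := by
    field_simp
    ring
  rw [key]
  have ha3 : a^3 < 0 := by
    exact (by decide : Odd 3).pow_neg ha
  have hd : 0 ≤ (b + 3*(-b/(2*a))*a + (-b/(2*a))^3)^2
      - (a + (-b/(2*a))^2) * (c + 4*(-b/(2*a))*b + 6*(-b/(2*a))^2*a + (-b/(2*a))^4) := by
    linarith
  nlinarith [mul_nonneg (by linarith : (0:ℝ) ≤ -(16*a^3)) hd]

lemma quartet (w x y z : ℝ) (h : w + x + y + z = 0) :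
    (3 * ((w*x*y+w*x*z+w*y*z+x*y*z)/4)^2
        - 4 * ((w*x+w*y+w*z+x*y+x*z+y*z)/6) * (w*x*y*z))
      * (((w*x*y+w*x*z+w*y*z+x*y*z)/4)^2
        + 4 * ((w*x+w*y+w*z+x*y+x*z+y*z)/6)^3) ≤ 0 := by
  have h2 : (w+x+y+z)^2 = 0 := by rw [h]; ring
  have ha : (w*x+w*y+w*z+x*y+x*z+y*z)/6 ≤ 0 := by
    nlinarith [sq_nonneg w, sq_nonneg x, sq_nonneg y, sq_nonneg z]
  rcases eq_or_lt_of_le ha with heq | hlt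
  · -- degenerate case: all variables vanish
    have hsq : w^2+x^2+y^2+z^2 = 0 := by linear_combination h2 - 12*heq
    have hw : w = 0 := by
      have hw2 : w^2 = 0 :=
        le_antisymm (by nlinarith [sq_nonneg x, sq_nonneg y, sq_nonneg z]) (sq_nonneg w)
      exact pow_eq_zero_iff (by norm_num) |>.mp hw2
    have hx : x = 0 := by
      have hx2 : x^2 = 0 :=
        le_antisymm (by nlinarith [sq_nonneg w, sq_nonneg y, sq_nonneg z]) (sq_nonneg x)
      exact pow_eq_zero_iff (by norm_num) |>.mp hx2
    have hy : y = 0 := by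
      have hy2 : y^2 = 0 :=
        le_antisymm (by nlinarith [sq_nonneg w, sq_nonneg x, sq_nonneg z]) (sq_nonneg y)
      exact pow_eq_zero_iff (by norm_num) |>.mp hy2
    have hz : z = 0 := by
      have hz2 : z^2 = 0 :=
        le_antisymm (by nlinarith [sq_nonneg w, sq_nonneg x, sq_nonneg y]) (sq_nonneg z)
      exact pow_eq_zero_iff (by norm_num) |>.mp hz2
    subst hw hx hy hz
    norm_num
  · refine core _ _ _ hlt ?_
    intro t
    have e2id : (w*x+w*y+w*z+x*y+x*z+y*z)/6 + t^2
        = ((w+t)*(x+t)+(w+t)*(y+t)+(w+t)*(z+t)+(x+t)*(y+t)+(x+t)*(z+t)+(y+t)*(z+t))/6 := by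
      field_simp
      linear_combination (-3*t)*h
    have e3id : (w*x*y+w*x*z+w*y*z+x*y*z)/4 + 3*t*((w*x+w*y+w*z+x*y+x*z+y*z)/6) + t^3
        = ((w+t)*(x+t)*(y+t)+(w+t)*(x+t)*(z+t)+(w+t)*(y+t)*(z+t)+(x+t)*(y+t)*(z+t))/4 := by
      field_simp
      linear_combination (-18*t^2)*h
    have e4id : w*x*y*z + 4*t*((w*x*y+w*x*z+w*y*z+x*y*z)/4)
        + 6*t^2*((w*x+w*y+w*z+x*y+x*z+y*z)/6) + t^4
        = (w+t)*(x+t)*(y+t)*(z+t) := by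
      linear_combination (-t^3)*h
    rw [e2id, e3id, e4id]
    have hN := newton4 (w+t) (x+t) (y+t) (z+t)
    linarith

end ProductIneqAux

theorem product_inequality (n : ℕ) (hn : 4 ≤ n) (lam : Fin n → ℝ)
    (hsum : ∑ i, lam i = 0) :
    (3 * p 3 lam ^ 2 - 4 * p 2 lam * p 4 lam) * (p 3 lam ^ 2 + 4 * p 2 lam ^ 3) ≤ 0 := by
  classical
  set s : Multiset ℝ := Multiset.map lam Finset.univ.val with hs
  have hcard : Multiset.card s = n := by simp [hs]
  have hes : ∀ k, esymm k lam = s.esymm k := by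
    intro k
    rw [esymm, hs]
    exact (Finset.esymm_map_val lam Finset.univ k).symm
  obtain ⟨u, hu4, hq⟩ := ProductIneqAux.reduce_to_four n hn s hcard
  obtain ⟨w, x, y, z, rfl⟩ := ProductIneqAux.exists_four u hu4
  have hsum1 : s.esymm 1 = 0 := by
    have : s.esymm 1 = s.sum := by
      simp [Multiset.esymm, Multiset.powersetCard_one, Multiset.map_map, Function.comp]
    rw [this, hs]
    simpa [Finset.sum] using hsum
  have he1 : ({w, x, y, z} : Multiset ℝ).esymm 1 = w+x+y+z := by
    simp [Multiset.esymm, Multiset.powersetCard_one]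
    ring
  have he2 : ({w, x, y, z} : Multiset ℝ).esymm 2 = w*x+w*y+w*z+x*y+x*z+y*z := by
    simp [Multiset.esymm, Multiset.powersetCard_cons, Multiset.powersetCard_one]
    ring
  have he3 : ({w, x, y, z} : Multiset ℝ).esymm 3 = w*x*y+w*x*z+w*y*z+x*y*z := by
    simp [Multiset.esymm, Multiset.powersetCard_cons, Multiset.powersetCard_one]
    ring
  have he4 : ({w, x, y, z} : Multiset ℝ).esymm 4 = w*x*y*z := by
    simp [Multiset.esymm, Multiset.powersetCard_cons, Multiset.powersetCard_one]
    ring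
  have hzero : w + x + y + z = 0 := by
    have := hq 1 (by norm_num)
    rw [hsum1, he1] at this
    have hn0 : (0:ℝ) < (n.choose 1 : ℝ) := by
      exact_mod_cast Nat.choose_pos (by omega)
    rw [zero_div] at this
    have h4 : ((Nat.choose 4 1 : ℕ) : ℝ) = 4 := by norm_num
    rw [h4] at this
    linarith [(div_eq_iff (by norm_num : (4:ℝ) ≠ 0)).mp this.symm]
  have hp2 : p 2 lam = (w*x+w*y+w*z+x*y+x*z+y*z)/6 := by
    rw [p, hes 2, hq 2 (by norm_num), he2]
    norm_num [Nat.choose]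
  have hp3 : p 3 lam = (w*x*y+w*x*z+w*y*z+x*y*z)/4 := by
    rw [p, hes 3, hq 3 (by norm_num), he3]
    norm_num [Nat.choose]
  have hp4 : p 4 lam = w*x*y*z := by
    rw [p, hes 4, hq 4 (by norm_num), he4]
    norm_num [Nat.choose]
  rw [hp2, hp3, hp4]
  exact ProductIneqAux.quartet w x y z hzero
end
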